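/- arXiv:1105.3022 — 9 statements merged into one kernel-verified Lean document; each statement's English description precedes it below -/
import Mathlib

section
/- For every integer m ≥ 1 and every n ∈ ℕ, the determinantal identity Ψ_{m−1}(Δ³S)_n · Ψ_m(S)_{n+1} − Ψ_{m−1}(Δ³S)_{n+1} · Ψ_m(S)_n = Ψ_m(ΔS)_n · Ψ_{m−1}(Δ²S)_{n+1} holds. (This is the bilinear relation F_k^n G_k^{n+1} − F_k^{n+1} G_k^n = F_{k+1}^n F_{k−1}^{n+1} of the lattice Boussinesq molecule solution in the case k = 3m.) -/
/-- Forward difference operator: `(Δ v) n = v (n+1) - v n`. -/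
def Δ (v : ℕ → ℝ) : ℕ → ℝ := fun n => v (n + 1) - v n

/-- `Psi k v n` is the determinant of the `k × k` matrix whose `(i, j)` entry is
`(Δ^[2*i] v) (n + j)`.  For `k = 0` this is the empty determinant `1`. -/
noncomputable def Psi (k : ℕ) (v : ℕ → ℝ) (n : ℕ) : ℝ :=
  (Matrix.of fun i j : Fin k => (Δ^[2 * i.val] v) (n + j.val)).det

lemma diff_expand : ∀ (j : ℕ) (v : ℕ → ℝ) (n : ℕ),
    v (n + j) = ∑ t ∈ Finset.range (j + 1), (j.choose t : ℝ) * (Δ^[t] v) n := by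
  intro j
  induction j with
  | zero => intro v n; simp
  | succ j ih =>
    intro v n
    have hL : v (n + (j + 1)) = v (n + j) + Δ v (n + j) := by
      simp [Δ]
      rw [Nat.add_assoc]
    have hiter : ∀ t : ℕ, (Δ^[t] (Δ v)) n = (Δ^[t + 1] v) n := by
      intro t
      rw [Function.iterate_succ_apply]
    have hA : ∑ t ∈ Finset.range (j + 2), ((j + 1).choose t : ℝ) * (Δ^[t] v) n
        = (∑ t ∈ Finset.range (j + 1), ((j + 1).choose (t + 1) : ℝ) * (Δ^[t + 1] v) n)
          + ((j + 1).choose 0 : ℝ) * (Δ^[0] v) n :=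
      Finset.sum_range_succ' (fun t => ((j + 1).choose t : ℝ) * (Δ^[t] v) n) (j + 1)
    have hB : ∑ t ∈ Finset.range (j + 1), ((j + 1).choose (t + 1) : ℝ) * (Δ^[t + 1] v) n
        = (∑ t ∈ Finset.range (j + 1), (j.choose t : ℝ) * (Δ^[t + 1] v) n)
          + ∑ t ∈ Finset.range (j + 1), (j.choose (t + 1) : ℝ) * (Δ^[t + 1] v) n := by
      rw [← Finset.sum_add_distrib]
      refine Finset.sum_congr rfl fun t _ => ?_
      rw [Nat.choose_succ_succ]
      push_cast
      ring
    have hC : ∑ t ∈ Finset.range (j + 1), (j.choose t : ℝ) * (Δ^[t + 1] v) n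
        = ∑ t ∈ Finset.range (j + 1), (j.choose t : ℝ) * (Δ^[t] (Δ v)) n :=
      Finset.sum_congr rfl fun t _ => by rw [hiter]
    have hD : ∑ t ∈ Finset.range (j + 1), (j.choose (t + 1) : ℝ) * (Δ^[t + 1] v) n
        = ∑ t ∈ Finset.range j, (j.choose (t + 1) : ℝ) * (Δ^[t + 1] v) n := by
      rw [Finset.sum_range_succ]
      simp [Nat.choose_succ_self]
    have hE : ∑ t ∈ Finset.range (j + 1), (j.choose t : ℝ) * (Δ^[t] v) n
        = (∑ t ∈ Finset.range j, (j.choose (t + 1) : ℝ) * (Δ^[t + 1] v) n)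
          + (j.choose 0 : ℝ) * (Δ^[0] v) n :=
      Finset.sum_range_succ' (fun t => (j.choose t : ℝ) * (Δ^[t] v) n) j
    have h0 : ((j + 1).choose 0 : ℝ) * (Δ^[0] v) n = (j.choose 0 : ℝ) * (Δ^[0] v) n := by
      simp
    rw [hL, ih v n, ih (Δ v) n]
    rw [hA, hB, hC, hD, h0]
    linarith [hE]

lemma hankel_reduce (p : ℕ) (f : Fin p → ℕ) (v : ℕ → ℝ) (N : ℕ) :
    (Matrix.of fun i j : Fin p => (Δ^[f i] v) (N + j.val)).det
      = (Matrix.of fun i j : Fin p => (Δ^[f i + j.val] v) N).det := by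
  have hM : (Matrix.of fun i j : Fin p => (Δ^[f i] v) (N + j.val))
      = (Matrix.of fun i t : Fin p => (Δ^[f i + t.val] v) N)
        * (Matrix.of fun t j : Fin p => ((j.val).choose t.val : ℝ)) := by
    ext i j
    rw [Matrix.mul_apply]
    simp only [Matrix.of_apply]
    calc (Δ^[f i] v) (N + j.val)
        = ∑ t ∈ Finset.range (j.val + 1),
            ((j.val).choose t : ℝ) * (Δ^[t] (Δ^[f i] v)) N := diff_expand j.val _ N
      _ = ∑ t ∈ Finset.range p,
            ((j.val).choose t : ℝ) * (Δ^[t] (Δ^[f i] v)) N := by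
          refine Finset.sum_subset (Finset.range_subset_range.mpr (by omega : j.val + 1 ≤ p)) ?_
          intro x hx hx'
          have hxx : j.val < x := by
            simp only [Finset.mem_range] at hx hx'
            omega
          rw [Nat.choose_eq_zero_of_lt hxx]
          simp
      _ = ∑ t ∈ Finset.range p, (Δ^[f i + t] v) N * ((j.val).choose t : ℝ) := by
          refine Finset.sum_congr rfl fun t _ => ?_
          rw [Nat.add_comm (f i) t, Function.iterate_add_apply]
          ring
      _ = ∑ t : Fin p, (Δ^[f i + t.val] v) N * ((j.val).choose t.val : ℝ) :=
          (Fin.sum_univ_eq_sum_range (fun t => (Δ^[f i + t] v) N * ((j.val).choose t : ℝ)) p).symm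
  rw [hM, Matrix.det_mul]
  have hP : (Matrix.of fun t j : Fin p => ((j.val).choose t.val : ℝ)).det = 1 := by
    rw [Matrix.det_of_upperTriangular]
    · apply Finset.prod_eq_one
      intro i _
      simp [Nat.choose_self]
    · intro i j hij
      have hij' : (j : ℕ) < (i : ℕ) := hij
      simp only [Matrix.of_apply]
      rw [Nat.choose_eq_zero_of_lt hij']
      simp
  rw [hP, mul_one]

lemma telescope (p : ℕ) (g : Fin p → ℕ) (V : ℕ → ℝ) :
    (Matrix.of fun i j : Fin p => V (g i + j.val) + V (g i + j.val + 1)).det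
      = ∑ t : Fin (p + 1), (Matrix.of fun i j : Fin p => V (g i + (t.succAbove j).val)).det := by
  classical
  set a : Fin (p + 1) → (Fin p → ℝ) := fun c i => V (g i + c.val) with ha
  set F := (Matrix.detRowAlternating : (Fin p → ℝ) [⋀^Fin p]→ₗ[ℝ] ℝ) with hF
  have hdet : ∀ w : Fin p → Fin p → ℝ,
      (Matrix.of fun i j : Fin p => w j i).det = F w := by
    intro w
    rw [← Matrix.det_transpose]
    rfl
  set ch : Fin p → Fin 2 → (Fin p → ℝ) :=
    fun j b => if b = 0 then a j.castSucc else a j.succ with hch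
  set θ : Fin (p + 1) → (Fin p → Fin 2) := fun t j => if j.val < t.val then 0 else 1 with hθ
  have two : ∀ y : Fin 2, y = 0 ∨ y = 1 := by decide
  -- LHS as F of a sum in each slot
  have hLHS : (Matrix.of fun i j : Fin p => V (g i + j.val) + V (g i + j.val + 1)).det
      = F (fun j => ∑ b : Fin 2, ch j b) := by
    rw [hdet (fun j i => V (g i + j.val) + V (g i + j.val + 1))]
    congr 1
    funext j
    rw [Fin.sum_univ_two]
    funext i
    simp only [Pi.add_apply, hch, ha, if_pos rfl, Fin.coe_castSucc, Fin.val_succ,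
      if_neg (by decide : (1 : Fin 2) ≠ 0)]
    rfl
  have hexp : F (fun j => ∑ b : Fin 2, ch j b)
      = ∑ r : Fin p → Fin 2, F (fun j => ch j (r j)) :=
    F.toMultilinearMap.map_sum ch
  -- classification of choice functions
  have main_split : ∀ h : Fin p → Fin 2,
      (∃ t : Fin (p + 1), h = θ t) ∨
        (∃ x : ℕ, ∃ hx : x + 1 < p,
          h ⟨x, by omega⟩ = 1 ∧ h ⟨x + 1, hx⟩ = 0) := by
    intro h
    by_cases hdesc : ∃ x : ℕ, ∃ hx : x + 1 < p, h ⟨x, by omega⟩ = 1 ∧ h ⟨x + 1, hx⟩ = 0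
    · exact Or.inr hdesc
    · left
      push_neg at hdesc
      have mono : ∀ (b : ℕ) (hb : b < p) (a' : ℕ) (ha' : a' ≤ b),
          h ⟨a', by omega⟩ = 1 → h ⟨b, hb⟩ = 1 := by
        intro b
        induction b with
        | zero =>
          intro hb a' ha' h1
          have : a' = 0 := by omega
          subst this
          exact h1
        | succ b ihb =>
          intro hb a' ha' h1
          rcases Nat.lt_or_ge a' (b + 1) with hlt | hge
          · have hb' : b < p := by omega
            have hone : h ⟨b, by omega⟩ = 1 := ihb hb' a' (by omega) h1
            have hne := hdesc b hb hone
            rcases two (h ⟨b + 1, hb⟩) with h0 | h1'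
            · exact absurd h0 hne
            · exact h1'
          · have : a' = b + 1 := by omega
            subst this
            exact h1
      set c := (Finset.univ.filter (fun j : Fin p => h j = 0)).card with hc
      have hcle : c ≤ p := le_trans (Finset.card_filter_le _ _) (by simp)
      refine ⟨⟨c, by omega⟩, ?_⟩
      funext j
      rcases two (h j) with h0 | h1
      · have hsub : Finset.Iic j ⊆ Finset.univ.filter (fun j : Fin p => h j = 0) := by
          intro i hi
          simp only [Finset.mem_Iic] at hi
          simp only [Finset.mem_filter, Finset.mem_univ, true_and]
          rcases two (h i) with hi0 | hi1
          · exact hi0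
          · exfalso
            have hji : (i : ℕ) ≤ (j : ℕ) := hi
            have h1' : h ⟨i.val, i.isLt⟩ = 1 := by rwa [Fin.eta]
            have := mono j.val j.isLt i.val hji h1'
            rw [Fin.eta] at this
            rw [h0] at this
            exact absurd this (by decide)
        have hjc : j.val + 1 ≤ c := by
          have := Finset.card_le_card hsub
          rwa [Fin.card_Iic] at this
        rw [h0, hθ]
        simp only
        rw [if_pos (by omega : j.val < c)]
      · have hsub : Finset.univ.filter (fun j : Fin p => h j = 0) ⊆ Finset.Iio j := by
          intro i hi
          simp only [Finset.mem_filter, Finset.mem_univ, true_and] at hi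
          simp only [Finset.mem_Iio]
          by_contra hge
          push_neg at hge
          have hji : (j : ℕ) ≤ (i : ℕ) := hge
          have h1' : h ⟨j.val, j.isLt⟩ = 1 := by rwa [Fin.eta]
          have := mono i.val i.isLt j.val hji h1'
          rw [Fin.eta] at this
          rw [hi] at this
          exact absurd this (by decide)
        have hcj : c ≤ j.val := by
          have := Finset.card_le_card hsub
          rwa [Fin.card_Iio] at this
        rw [h1, hθ]
        simp only
        rw [if_neg (by omega : ¬ j.val < c)]
  -- vanishing off the image of θ
  have hzero : ∀ h : Fin p → Fin 2, h ∉ Finset.image θ Finset.univ →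
      F (fun j => ch j (h j)) = 0 := by
    intro h hh
    rcases main_split h with ⟨t, rfl⟩ | ⟨x, hx, h1, h0⟩
    · exact absurd (Finset.mem_image_of_mem θ (Finset.mem_univ t)) hh
    · refine F.map_eq_zero_of_eq _ (i := ⟨x, by omega⟩) (j := ⟨x + 1, hx⟩) ?_ ?_
      · rw [h1, h0]
        simp only [hch, if_neg (by decide : (1 : Fin 2) ≠ 0), if_pos rfl]
        have hxe : (⟨x, by omega⟩ : Fin p).succ = (⟨x + 1, hx⟩ : Fin p).castSucc := by
          apply Fin.ext
          simp
        rw [hxe]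
      · intro hcon
        have := congrArg Fin.val hcon
        simp at this
  have hinj : ∀ x ∈ Finset.univ, ∀ y ∈ (Finset.univ : Finset (Fin (p + 1))),
      θ x = θ y → x = y := by
    intro s _ t _ hst
    by_contra hne
    have key : ∀ s t : Fin (p + 1), s.val < t.val → θ s ≠ θ t := by
      intro s t hlt hst
      have hs : s.val < p := by omega
      have := congrFun hst ⟨s.val, hs⟩
      rw [hθ] at this
      simp only at this
      rw [if_neg (by omega), if_pos (by omega)] at this
      exact absurd this (by decide)
    rcases Nat.lt_trichotomy s.val t.val with h | h | h
    · exact key s t h hst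
    · exact hne (Fin.ext h)
    · exact key t s h hst.symm
  -- F at a threshold function
  have hθval : ∀ t : Fin (p + 1),
      F (fun j => ch j (θ t j))
        = (Matrix.of fun i j : Fin p => V (g i + (t.succAbove j).val)).det := by
    intro t
    rw [hdet (fun j i => V (g i + (t.succAbove j).val))]
    congr 1
    funext j
    by_cases hj : j.val < t.val
    · rw [Fin.succAbove_of_castSucc_lt _ _ (by simpa [Fin.lt_def] using hj)]
      show ch j (θ t j) = a j.castSucc
      rw [hθ]
      simp only
      rw [if_pos hj, hch]
      simp
    · rw [Fin.succAbove_of_le_castSucc _ _ (by simp [Fin.le_def]; omega)]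
      show ch j (θ t j) = a j.succ
      rw [hθ]
      simp only
      rw [if_neg hj, hch]
      simp
  rw [hLHS, hexp]
  rw [← Finset.sum_subset (Finset.subset_univ (Finset.image θ Finset.univ))
    (fun h _ hh => hzero h hh)]
  rw [Finset.sum_image hinj]
  exact Finset.sum_congr rfl fun t _ => hθval t

noncomputable def Amat {q : ℕ} (v : Fin (q + 1) → Fin q → ℝ) (c : Fin (q + 1)) : ℝ :=
  (Matrix.of fun a b : Fin q => v (c.succAbove b) a).det

noncomputable def Bmat {K : ℕ} (v : Fin (K + 3) → Fin (K + 2) → ℝ)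
    (g : Fin (K + 1) → Fin (K + 3)) : ℝ :=
  (Matrix.of fun i j : Fin (K + 1) => v (g j) i.succ).det

lemma cramer_rel {q : ℕ} (v : Fin (q + 1) → Fin q → ℝ) (i : Fin q) :
    ∑ c : Fin (q + 1), (-1 : ℝ) ^ (c : ℕ) * Amat v c * v c i = 0 := by
  set N : Matrix (Fin (q + 1)) (Fin (q + 1)) ℝ :=
    Matrix.of (Fin.cons (fun c => v c i) (fun a c => v c a)) with hN
  have h0 : N.det = 0 := by
    refine Matrix.det_zero_of_row_eq (i := 0) (j := i.succ) (Fin.succ_ne_zero i).symm ?_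
    funext c
    show (Fin.cons (fun c => v c i) (fun a c => v c a) : Fin (q+1) → Fin (q+1) → ℝ) 0 c
      = (Fin.cons (fun c => v c i) (fun a c => v c a) : Fin (q+1) → Fin (q+1) → ℝ) i.succ c
    rw [Fin.cons_zero, Fin.cons_succ]
  have h1 := Matrix.det_succ_row_zero N
  rw [h0] at h1
  refine Eq.trans ?_ h1.symm
  refine Finset.sum_congr rfl fun c _ => ?_
  have e1 : N 0 c = v c i := rfl
  have e2 : N.submatrix Fin.succ c.succAbove
      = Matrix.of fun a b : Fin q => v (c.succAbove b) a := by
    ext a b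
    show N a.succ (c.succAbove b) = v (c.succAbove b) a
    show (Fin.cons (fun c => v c i) (fun a c => v c a) : Fin (q+1) → Fin (q+1) → ℝ)
      a.succ (c.succAbove b) = v (c.succAbove b) a
    rw [Fin.cons_succ]
  rw [e1, e2, Amat]
  ring

lemma det_updateRow_finsum {q : ℕ} (M : Matrix (Fin q) (Fin q) ℝ) (i : Fin q)
    {α : Type} [DecidableEq α] (s : Finset α) (w : α → Fin q → ℝ) :
    (M.updateRow i (∑ c ∈ s, w c)).det = ∑ c ∈ s, (M.updateRow i (w c)).det := by
  induction s using Finset.induction_on with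
  | empty =>
    simp only [Finset.sum_empty]
    exact Matrix.det_eq_zero_of_row_eq_zero i (fun j => by simp [Matrix.updateRow_self])
  | insert _ _ hc ih =>
    rw [Finset.sum_insert hc, Matrix.det_updateRow_add, ih, Finset.sum_insert hc]

lemma pluecker {K : ℕ} (v : Fin (K + 3) → Fin (K + 2) → ℝ) (r : Fin (K + 1)) :
    Amat v 0 * Bmat v (fun j => ((r.succ).succAbove j).castSucc)
      - Amat v ((r.succ).castSucc) * Bmat v (fun j => j.succ.castSucc)
      + Amat v (Fin.last (K + 2)) * Bmat v (fun j => ((r.castSucc).succAbove j).succ) = 0 := by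
  classical
  set Cmap : Fin K → Fin (K + 3) := fun j => ((r.succAbove j).succ).castSucc with hCmap
  set e0 : Fin (K + 2) → ℝ := fun i => if i = 0 then 1 else 0 with he0
  set RB : Matrix (Fin (K + 2)) (Fin (K + 2)) ℝ :=
    Matrix.of (Fin.cons 0 (Fin.cons e0 (fun j : Fin K => v (Cmap j)))) with hRB
  set G : (Fin (K + 2) → ℝ) → ℝ := fun x => (RB.updateRow 0 x).det with hG
  have hGrow : ∀ x : Fin (K + 2) → ℝ,
      RB.updateRow 0 x
        = Matrix.of (Fin.cons x (Fin.cons e0 (fun j : Fin K => v (Cmap j)))) := by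
    intro x
    ext a b
    refine Fin.cases ?_ ?_ a
    · rw [Matrix.updateRow_self]
      show x b = (Fin.cons x (Fin.cons e0 (fun j : Fin K => v (Cmap j)))
        : Fin (K+2) → Fin (K+2) → ℝ) 0 b
      rw [Fin.cons_zero]
    · intro a'
      rw [Matrix.updateRow_ne (Fin.succ_ne_zero a')]
      show (Fin.cons (0 : Fin (K+2) → ℝ) (Fin.cons e0 (fun j : Fin K => v (Cmap j)))
          : Fin (K+2) → Fin (K+2) → ℝ) a'.succ b
        = (Fin.cons x (Fin.cons e0 (fun j : Fin K => v (Cmap j)))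
          : Fin (K+2) → Fin (K+2) → ℝ) a'.succ b
      rw [Fin.cons_succ, Fin.cons_succ]
  -- Laplace expansion of G along the `e0` row
  have hexp : ∀ x : Fin (K + 2) → ℝ,
      G x = -(Matrix.of (fun a b : Fin (K + 1) =>
        (Fin.cons x (fun j : Fin K => v (Cmap j)) : Fin (K + 1) → Fin (K + 2) → ℝ)
          a b.succ)).det := by
    intro x
    show (RB.updateRow 0 x).det = _
    rw [hGrow x]
    set M : Matrix (Fin (K + 2)) (Fin (K + 2)) ℝ :=
      Matrix.of (Fin.cons x (Fin.cons e0 (fun j : Fin K => v (Cmap j)))) with hM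
    rw [Matrix.det_succ_row M 1]
    rw [Finset.sum_eq_single (0 : Fin (K + 2))]
    · have hM10 : M 1 0 = 1 := by
        show (Fin.cons x (Fin.cons e0 (fun j : Fin K => v (Cmap j)))
          : Fin (K+2) → Fin (K+2) → ℝ) ((0 : Fin (K+1)).succ) 0 = 1
        rw [Fin.cons_succ, Fin.cons_zero]
        simp [he0]
      have hsub : M.submatrix (1 : Fin (K + 2)).succAbove (0 : Fin (K + 2)).succAbove
          = Matrix.of (fun a b : Fin (K + 1) =>
            (Fin.cons x (fun j : Fin K => v (Cmap j)) : Fin (K + 1) → Fin (K + 2) → ℝ)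
              a b.succ) := by
        ext a b
        have hcol : (0 : Fin (K + 2)).succAbove b = b.succ := Fin.zero_succAbove b
        refine Fin.cases ?_ ?_ a
        · have hrow : (1 : Fin (K + 2)).succAbove 0 = 0 := by
            show ((0 : Fin (K+1)).succ).succAbove 0 = 0
            rw [Fin.succAbove_succ_of_le _ _ (le_refl _)]
            rfl
          show M ((1 : Fin (K + 2)).succAbove 0) ((0 : Fin (K + 2)).succAbove b) = _
          rw [hrow, hcol]
          show (Fin.cons x (Fin.cons e0 (fun j : Fin K => v (Cmap j)))
            : Fin (K+2) → Fin (K+2) → ℝ) 0 b.succ = _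
          rw [Fin.cons_zero]
          show x b.succ = (Fin.cons x (fun j : Fin K => v (Cmap j))
            : Fin (K+1) → Fin (K+2) → ℝ) 0 b.succ
          rw [Fin.cons_zero]
        · intro j
          have hrow : (1 : Fin (K + 2)).succAbove j.succ = j.succ.succ := by
            show ((0 : Fin (K+1)).succ).succAbove j.succ = j.succ.succ
            rw [Fin.succ_succAbove_succ, Fin.zero_succAbove]
          show M ((1 : Fin (K + 2)).succAbove j.succ) ((0 : Fin (K + 2)).succAbove b) = _
          rw [hrow, hcol]
          show (Fin.cons x (Fin.cons e0 (fun j : Fin K => v (Cmap j)))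
            : Fin (K+2) → Fin (K+2) → ℝ) j.succ.succ b.succ = _
          rw [Fin.cons_succ, Fin.cons_succ]
          show v (Cmap j) b.succ = (Fin.cons x (fun j : Fin K => v (Cmap j))
            : Fin (K+1) → Fin (K+2) → ℝ) j.succ b.succ
          rw [Fin.cons_succ]
      rw [hM10, hsub]
      norm_num
    · intro b _ hb
      have hMb : M 1 b = 0 := by
        show (Fin.cons x (Fin.cons e0 (fun j : Fin K => v (Cmap j)))
          : Fin (K+2) → Fin (K+2) → ℝ) ((0 : Fin (K+1)).succ) b = 0
        rw [Fin.cons_succ, Fin.cons_zero]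
        simp [he0, hb]
      rw [hMb]
      ring
    · intro habs
      exact absurd (Finset.mem_univ _) habs
  -- the three surviving values of G
  have hG0 : G (v 0) = - Bmat v (fun j => ((r.succ).succAbove j).castSucc) := by
    rw [hexp (v 0)]
    congr 1
    rw [Bmat]
    conv_rhs => rw [← Matrix.det_transpose]
    congr 1
    ext a b
    show (Fin.cons (v 0) (fun j : Fin K => v (Cmap j)) : Fin (K+1) → Fin (K+2) → ℝ) a b.succ
      = v (((r.succ).succAbove a).castSucc) b.succ
    refine Fin.cases ?_ ?_ a
    · rw [Fin.cons_zero]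
      have : (r.succ).succAbove 0 = 0 := by
        rw [Fin.succAbove_succ_of_le _ _ (Fin.zero_le r)]
        rfl
      rw [this]
      rfl
    · intro j
      rw [Fin.cons_succ]
      have : (r.succ).succAbove j.succ = ((r.succAbove j).succ : Fin (K + 2)) :=
        Fin.succ_succAbove_succ r j
      rw [this]
  have hGt : G (v ((r.succ).castSucc))
      = -((-1 : ℝ) ^ (r : ℕ) * Bmat v (fun j => j.succ.castSucc)) := by
    rw [hexp (v ((r.succ).castSucc))]
    have hperm : (Matrix.of (fun a b : Fin (K + 1) =>
        (Fin.cons (v ((r.succ).castSucc)) (fun j : Fin K => v (Cmap j))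
          : Fin (K + 1) → Fin (K + 2) → ℝ) a b.succ))
        = (Matrix.of fun a b : Fin (K + 1) => v ((a.succ).castSucc) b.succ).submatrix
            (r.cycleRange).symm id := by
      ext a b
      show (Fin.cons (v ((r.succ).castSucc)) (fun j : Fin K => v (Cmap j))
          : Fin (K + 1) → Fin (K + 2) → ℝ) a b.succ
        = v ((((r.cycleRange).symm a).succ).castSucc) b.succ
      refine Fin.cases ?_ ?_ a
      · rw [Fin.cons_zero, Fin.cycleRange_symm_zero]
      · intro j
        rw [Fin.cons_succ, Fin.cycleRange_symm_succ]
    rw [hperm, Matrix.det_permute]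
    have hsign : Equiv.Perm.sign (r.cycleRange).symm = (-1 : ℤˣ) ^ (r : ℕ) := by
      rw [Equiv.Perm.sign_symm, Fin.sign_cycleRange]
    rw [hsign]
    have hBm : (Matrix.of fun a b : Fin (K + 1) => v ((a.succ).castSucc) b.succ).det
        = Bmat v (fun j => j.succ.castSucc) := by
      rw [Bmat, ← Matrix.det_transpose]
      congr 1
    rw [hBm]
    push_cast
    ring
  have hGl : G (v (Fin.last (K + 2)))
      = -((-1 : ℝ) ^ K * Bmat v (fun j => ((r.castSucc).succAbove j).succ)) := by
    rw [hexp (v (Fin.last (K + 2)))]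
    have hperm : (Matrix.of (fun a b : Fin (K + 1) =>
        (Fin.cons (v (Fin.last (K + 2))) (fun j : Fin K => v (Cmap j))
          : Fin (K + 1) → Fin (K + 2) → ℝ) a b.succ))
        = (Matrix.of fun a b : Fin (K + 1) =>
            v (((r.castSucc).succAbove a).succ) b.succ).submatrix
            ((Fin.last K).cycleRange).symm id := by
      ext a b
      show (Fin.cons (v (Fin.last (K + 2))) (fun j : Fin K => v (Cmap j))
          : Fin (K + 1) → Fin (K + 2) → ℝ) a b.succ
        = v (((r.castSucc).succAbove (((Fin.last K).cycleRange).symm a)).succ) b.succ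
      refine Fin.cases ?_ ?_ a
      · rw [Fin.cons_zero, Fin.cycleRange_symm_zero]
        have h1 : (r.castSucc).succAbove (Fin.last K) = Fin.last (K + 1) := by
          rw [Fin.succAbove_castSucc_of_le _ _ (Fin.le_last r)]
          exact Fin.succ_last K
        rw [h1, Fin.succ_last]
      · intro j
        rw [Fin.cons_succ, Fin.cycleRange_symm_succ, Fin.succAbove_last]
        have h2 : (r.castSucc).succAbove j.castSucc = (r.succAbove j).castSucc :=
          Fin.castSucc_succAbove_castSucc
        rw [h2, Fin.succ_castSucc]
    rw [hperm, Matrix.det_permute]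
    have hsign : Equiv.Perm.sign ((Fin.last K).cycleRange).symm = (-1 : ℤˣ) ^ K := by
      rw [Equiv.Perm.sign_symm, Fin.sign_cycleRange, Fin.val_last]
    rw [hsign]
    have hBm : (Matrix.of fun a b : Fin (K + 1) =>
        v (((r.castSucc).succAbove a).succ) b.succ).det
        = Bmat v (fun j => ((r.castSucc).succAbove j).succ) := by
      rw [Bmat, ← Matrix.det_transpose]
      congr 1
    rw [hBm]
    push_cast
    ring
  have hGC : ∀ j : Fin K, G (v (Cmap j)) = 0 := by
    intro j
    show (RB.updateRow 0 (v (Cmap j))).det = 0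
    rw [hGrow (v (Cmap j))]
    refine Matrix.det_zero_of_row_eq (i := (0 : Fin (K + 2))) (j := j.succ.succ)
      (Fin.succ_ne_zero j.succ).symm ?_
    funext b
    show (Fin.cons (v (Cmap j)) (Fin.cons e0 (fun j' : Fin K => v (Cmap j')))
        : Fin (K+2) → Fin (K+2) → ℝ) 0 b
      = (Fin.cons (v (Cmap j)) (Fin.cons e0 (fun j' : Fin K => v (Cmap j')))
        : Fin (K+2) → Fin (K+2) → ℝ) j.succ.succ b
    rw [Fin.cons_zero, Fin.cons_succ, Fin.cons_succ]
  -- Cramer relation pairs to zero with G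
  have hvec : (∑ c : Fin (K + 3), ((-1 : ℝ) ^ (c : ℕ) * Amat v c) • v c)
      = (0 : Fin (K + 2) → ℝ) := by
    funext i
    have := cramer_rel v i
    simpa [Finset.sum_apply, mul_assoc] using this
  have hsum0 : ∑ c : Fin (K + 3), (-1 : ℝ) ^ (c : ℕ) * Amat v c * G (v c) = 0 := by
    have h1 : ∀ c : Fin (K + 3), (-1 : ℝ) ^ (c : ℕ) * Amat v c * G (v c)
        = (RB.updateRow 0 (((-1 : ℝ) ^ (c : ℕ) * Amat v c) • v c)).det := by
      intro c
      rw [Matrix.det_updateRow_smul]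
    calc ∑ c : Fin (K + 3), (-1 : ℝ) ^ (c : ℕ) * Amat v c * G (v c)
        = ∑ c : Fin (K + 3),
            (RB.updateRow 0 (((-1 : ℝ) ^ (c : ℕ) * Amat v c) • v c)).det :=
          Finset.sum_congr rfl fun c _ => h1 c
      _ = (RB.updateRow 0 (∑ c : Fin (K + 3), ((-1 : ℝ) ^ (c : ℕ) * Amat v c) • v c)).det :=
          (det_updateRow_finsum RB 0 Finset.univ _).symm
      _ = 0 := by
          rw [hvec]
          exact Matrix.det_eq_zero_of_row_eq_zero 0 (fun j => by simp [Matrix.updateRow_self])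
  -- collapse the sum to the three nonzero terms
  set t'' : Fin (K + 3) := (r.succ).castSucc with ht''
  have hd1 : (0 : Fin (K + 3)) ≠ t'' := by
    intro h
    have := congrArg Fin.val h
    simp [ht''] at this
  have hd2 : t'' ≠ Fin.last (K + 2) := by
    intro h
    have := congrArg Fin.val h
    simp [ht''] at this
    omega
  have hd3 : (0 : Fin (K + 3)) ≠ Fin.last (K + 2) := by
    intro h
    have := congrArg Fin.val h
    simp at this
  have hsupp : ∀ c : Fin (K + 3),
      c ∉ ({0, t'', Fin.last (K + 2)} : Finset (Fin (K + 3))) →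
      (-1 : ℝ) ^ (c : ℕ) * Amat v c * G (v c) = 0 := by
    intro c hc
    simp only [Finset.mem_insert, Finset.mem_singleton] at hc
    push_neg at hc
    obtain ⟨hc0, hct, hcl⟩ := hc
    obtain ⟨d, hd⟩ : ∃ d : Fin (K + 2), c = d.succ := by
      rcases Fin.eq_zero_or_eq_succ c with h | h
      · exact absurd h hc0
      · exact h
    obtain ⟨e, he⟩ : ∃ e : Fin (K + 1), c = (e.succ).castSucc := by
      rcases Fin.eq_castSucc_or_eq_last d with ⟨e, hee⟩ | hee
      · exact ⟨e, by rw [hd, hee, Fin.succ_castSucc]⟩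
      · exfalso
        apply hcl
        rw [hd, hee, Fin.succ_last]
    have her : e ≠ r := by
      rintro rfl
      exact hct (by rw [he])
    obtain ⟨j, hj⟩ := Fin.exists_succAbove_eq her
    have hcj : c = Cmap j := by
      rw [he, hCmap]
      simp only
      rw [hj]
    rw [hcj, hGC j, mul_zero]
  have hthree : (-1 : ℝ) ^ ((0 : Fin (K + 3)) : ℕ) * Amat v 0 * G (v 0)
      + ((-1 : ℝ) ^ ((t'' : Fin (K + 3)) : ℕ) * Amat v t'' * G (v t'')
        + (-1 : ℝ) ^ ((Fin.last (K + 2) : Fin (K + 3)) : ℕ) * Amat v (Fin.last (K + 2))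
            * G (v (Fin.last (K + 2)))) = 0 := by
    have hss : ∑ c ∈ ({0, t'', Fin.last (K + 2)} : Finset (Fin (K + 3))),
        (-1 : ℝ) ^ (c : ℕ) * Amat v c * G (v c)
        = ∑ c : Fin (K + 3), (-1 : ℝ) ^ (c : ℕ) * Amat v c * G (v c) :=
      Finset.sum_subset (Finset.subset_univ _) (fun c _ hc => hsupp c hc)
    rw [hsum0] at hss
    rw [← hss]
    rw [Finset.sum_insert (by simp [hd1, hd3]), Finset.sum_insert (by simp [hd2])]
    rw [Finset.sum_singleton]
  -- final sign bookkeeping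
  have hv0 : ((0 : Fin (K + 3)) : ℕ) = 0 := rfl
  have hvt : ((t'' : Fin (K + 3)) : ℕ) = (r : ℕ) + 1 := by
    simp [ht'']
  have hvl : ((Fin.last (K + 2) : Fin (K + 3)) : ℕ) = K + 2 := rfl
  rw [hv0, hvt, hvl, hG0, hGt, hGl] at hthree
  have hx : (-1 : ℝ) ^ (r : ℕ) * (-1 : ℝ) ^ (r : ℕ) = 1 := by
    rw [← pow_add]
    exact Even.neg_one_pow ⟨(r : ℕ), rfl⟩
  have hK2 : (-1 : ℝ) ^ (K + 2) = (-1 : ℝ) ^ K := by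
    rw [pow_add]
    norm_num
  rw [pow_zero, pow_succ, hK2] at hthree
  have hKK : (-1 : ℝ) ^ K * (-1 : ℝ) ^ K = 1 := by
    rw [← pow_add]
    exact Even.neg_one_pow ⟨K, rfl⟩
  linear_combination (-1 : ℝ) * hthree
    + (Amat v ((r.succ).castSucc) * Bmat v (fun j => j.succ.castSucc)) * hx
    - (Amat v (Fin.last (K + 2)) * Bmat v (fun j => ((r.castSucc).succAbove j).succ)) * hKK

noncomputable def AAd (U : ℕ → ℝ) (k : ℕ) (c : Fin (k + 2)) : ℝ :=
  (Matrix.of fun i j : Fin (k + 1) => U (2 * i.val + (c.succAbove j).val)).det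

noncomputable def B0d (U : ℕ → ℝ) (k : ℕ) (t : Fin (k + 1)) : ℝ :=
  (Matrix.of fun i j : Fin k => U (2 * i.val + 3 + (t.succAbove j).val)).det

noncomputable def BLd (U : ℕ → ℝ) (k : ℕ) (t : Fin (k + 1)) : ℝ :=
  (Matrix.of fun i j : Fin k => U (2 * i.val + 2 + (t.succAbove j).val)).det

lemma pluecker_U {k : ℕ} (U : ℕ → ℝ) (r : Fin k) :
    AAd U k 0 * BLd U k r.succ
      - AAd U k ((r.succ).castSucc) * B0d U k (Fin.last k)
      + AAd U k (Fin.last (k + 1)) * B0d U k r.castSucc = 0 := by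
  cases k with
  | zero => exact r.elim0
  | succ K =>
    have h := pluecker (fun (c : Fin (K + 3)) (i : Fin (K + 2)) => U (2 * i.val + c.val)) r
    set v : Fin (K + 3) → Fin (K + 2) → ℝ := fun c i => U (2 * i.val + c.val) with hv
    have eA : ∀ c : Fin (K + 3), Amat v c = AAd U (K + 1) c := by
      intro c
      rw [Amat, AAd]
    have eB1 : Bmat v (fun j => ((r.succ).succAbove j).castSucc) = BLd U (K + 1) r.succ := by
      rw [Bmat, BLd]
      congr 1
    have eB2 : Bmat v (fun j => j.succ.castSucc) = B0d U (K + 1) (Fin.last (K + 1)) := by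
      rw [Bmat, B0d]
      congr 1
      ext i j
      simp only [Matrix.of_apply, hv, Fin.coe_castSucc, Fin.val_succ, Fin.succAbove_last]
      congr 1
      omega
    have eB3 : Bmat v (fun j => ((r.castSucc).succAbove j).succ) = B0d U (K + 1) r.castSucc := by
      rw [Bmat, B0d]
      congr 1
      ext i j
      simp only [Matrix.of_apply, hv, Fin.val_succ]
      congr 1
      omega
    rw [eA, eA, eA, eB1, eB2, eB3] at h
    exact h

lemma psi_base (k : ℕ) (w : ℕ → ℝ) (N : ℕ) :
    Psi k w N = (Matrix.of fun i j : Fin k => (Δ^[2 * i.val + j.val] w) N).det := by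
  simp only [Psi]
  exact hankel_reduce k (fun i => 2 * i.val) w N

theorem stmt0 (S : ℕ → ℝ) (m : ℕ) (hm : 1 ≤ m) (n : ℕ) :
    Psi (m - 1) (Δ^[3] S) n * Psi m S (n + 1)
      - Psi (m - 1) (Δ^[3] S) (n + 1) * Psi m S n
      = Psi m (Δ S) n * Psi (m - 1) (Δ^[2] S) (n + 1) := by
  obtain ⟨k, rfl⟩ : ∃ k, m = k + 1 := ⟨m - 1, by omega⟩
  simp only [Nat.add_sub_cancel]
  set U : ℕ → ℝ := fun t => (Δ^[t] S) n with hU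
  have hstep : ∀ a : ℕ, (Δ^[a] S) (n + 1) = U a + U (a + 1) := by
    intro a
    have h1 : (Δ^[a + 1] S) n = (Δ^[a] S) (n + 1) - (Δ^[a] S) n := by
      rw [Function.iterate_succ_apply']
      rfl
    rw [hU]
    simp only
    rw [h1]
    ring
  -- the six determinant identities
  have e1 : Psi (k + 1) S n = AAd U k (Fin.last (k + 1)) := by
    rw [psi_base, AAd]
    congr 1
    ext i j
    simp only [Matrix.of_apply, Fin.succAbove_last, Fin.coe_castSucc]
    rfl
  have e2 : Psi (k + 1) (Δ S) n = AAd U k 0 := by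
    rw [psi_base, AAd]
    congr 1
  have e3 : Psi k (Δ^[3] S) n = B0d U k (Fin.last k) := by
    rw [psi_base, B0d]
    congr 1
    ext i j
    simp only [Matrix.of_apply, Fin.succAbove_last, Fin.coe_castSucc]
    rw [show 2 * i.val + 3 + j.val = 2 * i.val + j.val + 3 from by omega]
    exact (congrFun (Function.iterate_add_apply Δ (2 * i.val + j.val) 3 S) n).symm
  have e4 : Psi (k + 1) S (n + 1) = ∑ t : Fin (k + 2), AAd U k t := by
    rw [psi_base]
    have hm2 : (Matrix.of fun i j : Fin (k + 1) => (Δ^[2 * i.val + j.val] S) (n + 1))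
        = Matrix.of fun i j : Fin (k + 1) =>
            U (2 * i.val + j.val) + U (2 * i.val + j.val + 1) := by
      ext i j
      simp only [Matrix.of_apply]
      exact hstep _
    rw [hm2, telescope (k + 1) (fun i => 2 * i.val) U]
    rfl
  have e5 : Psi k (Δ^[3] S) (n + 1) = ∑ t : Fin (k + 1), B0d U k t := by
    rw [psi_base]
    have hm2 : (Matrix.of fun i j : Fin k => (Δ^[2 * i.val + j.val] (Δ^[3] S)) (n + 1))
        = Matrix.of fun i j : Fin k =>
            U ((2 * i.val + 3) + j.val) + U ((2 * i.val + 3) + j.val + 1) := by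
      ext i j
      simp only [Matrix.of_apply]
      have h1 : (Δ^[2 * i.val + j.val] (Δ^[3] S)) (n + 1)
          = (Δ^[2 * i.val + j.val + 3] S) (n + 1) :=
        congrFun (Function.iterate_add_apply Δ (2 * i.val + j.val) 3 S).symm (n + 1)
      rw [h1, hstep (2 * i.val + j.val + 3)]
      rw [show 2 * i.val + j.val + 3 = (2 * i.val + 3) + j.val from by omega]
    rw [hm2, telescope k (fun i => 2 * i.val + 3) U]
    rfl
  have e6 : Psi k (Δ^[2] S) (n + 1) = ∑ t : Fin (k + 1), BLd U k t := by
    rw [psi_base]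
    have hm2 : (Matrix.of fun i j : Fin k => (Δ^[2 * i.val + j.val] (Δ^[2] S)) (n + 1))
        = Matrix.of fun i j : Fin k =>
            U ((2 * i.val + 2) + j.val) + U ((2 * i.val + 2) + j.val + 1) := by
      ext i j
      simp only [Matrix.of_apply]
      have h1 : (Δ^[2 * i.val + j.val] (Δ^[2] S)) (n + 1)
          = (Δ^[2 * i.val + j.val + 2] S) (n + 1) :=
        congrFun (Function.iterate_add_apply Δ (2 * i.val + j.val) 2 S).symm (n + 1)
      rw [h1, hstep (2 * i.val + j.val + 2)]
      rw [show 2 * i.val + j.val + 2 = (2 * i.val + 2) + j.val from by omega]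
    rw [hm2, telescope k (fun i => 2 * i.val + 2) U]
    rfl
  rw [e1, e2, e3, e4, e5, e6]
  -- final algebra
  have hBL0 : BLd U k 0 = B0d U k (Fin.last k) := by
    rw [BLd, B0d]
    congr 1
    ext i j
    simp only [Matrix.of_apply, Fin.zero_succAbove, Fin.val_succ, Fin.succAbove_last,
      Fin.coe_castSucc]
    congr 1
    omega
  rw [Fin.sum_univ_succ (f := fun t => AAd U k t)]
  rw [Fin.sum_univ_castSucc (f := fun t => B0d U k t)]
  rw [Fin.sum_univ_succ (f := fun t => BLd U k t)]
  rw [Fin.sum_univ_castSucc (f := fun t : Fin (k + 1) => AAd U k t.succ)]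
  simp only [Fin.succ_castSucc, Fin.succ_last]
  rw [hBL0]
  have hs : AAd U k 0 * ∑ r : Fin k, BLd U k r.succ
      = (∑ r : Fin k, AAd U k ((r.succ).castSucc)) * B0d U k (Fin.last k)
        - AAd U k (Fin.last (k + 1)) * ∑ r : Fin k, B0d U k r.castSucc := by
    rw [Finset.mul_sum, Finset.sum_mul, Finset.mul_sum, ← Finset.sum_sub_distrib]
    refine Finset.sum_congr rfl fun r _ => ?_
    linear_combination pluecker_U U r
  linear_combination (-1 : ℝ) * hs
end

section
/- For every integer m ≥ 1 and every n ∈ ℕ, the determinantal identity Ψ_m(ΔS)_{n+1} · Ψ_{m−1}(Δ⁴S)_n − Ψ_m(ΔS)_n · Ψ_{m−1}(Δ⁴S)_{n+1} = Ψ_m(Δ²S)_n · Ψ_{m−1}(Δ³S)_{n+1} holds. (This is the bilinear relation F_k^n G_k^{n+1} − F_k^{n+1} G_k^n = F_{k+1}^n F_{k−1}^{n+1} of the lattice Boussinesq molecule solution in the case k = 3m+1.) -/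
open Matrix Polynomial

/-- Cofactor expansion: det of a matrix with one row replaced by a basis vector. -/
lemma det_updateRow_single {k : ℕ} (A : Matrix (Fin (k+1)) (Fin (k+1)) ℝ) (r c : Fin (k+1)) :
    (A.updateRow r (Pi.single c 1)).det
      = (-1) ^ ((r : ℕ) + (c : ℕ)) * (A.submatrix r.succAbove c.succAbove).det := by
  rw [Matrix.det_succ_row _ r]
  rw [Finset.sum_eq_single c]
  · simp
  · intro b _ hb
    simp [Pi.single_eq_of_ne hb]
  · simp

private def eqv (k : ℕ) : Fin 2 ⊕ Fin k ≃ Fin (k+2) :=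
  finSumFinEquiv.trans (finCongr (by omega))

lemma eqv_inl (k : ℕ) (i : Fin 2) : ((eqv k (Sum.inl i)) : ℕ) = (i : ℕ) := by
  simp [eqv]; try omega

lemma eqv_inr (k : ℕ) (i : Fin k) : ((eqv k (Sum.inr i)) : ℕ) = 2 + (i : ℕ) := by
  simp [eqv]; try omega

lemma det_two_rows {k : ℕ} (u v : Fin (k+2) → ℝ) :
    (((1 : Matrix (Fin (k+2)) (Fin (k+2)) ℝ).updateRow 0 u).updateRow 1 v).det
      = u 0 * v 1 - u 1 * v 0 := by
  set B := ((1 : Matrix (Fin (k+2)) (Fin (k+2)) ℝ).updateRow 0 u).updateRow 1 v with hB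
  have key : (B.submatrix (eqv k) (eqv k)).det = B.det := Matrix.det_submatrix_equiv_self _ _
  rw [← key]
  have hblock : B.submatrix (eqv k) (eqv k) =
      Matrix.fromBlocks
        !![u 0, u 1; v 0, v 1]
        (Matrix.of fun i j => B (eqv k (Sum.inl i)) (eqv k (Sum.inr j)))
        0 1 := by
    ext i j
    rcases i with i | i <;> rcases j with j | j
    · -- top-left
      have h0 : eqv k (Sum.inl 0) = (0 : Fin (k+2)) := by
        apply Fin.ext; simpa using eqv_inl k 0
      have h1 : eqv k (Sum.inl 1) = (1 : Fin (k+2)) := by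
        apply Fin.ext; simpa using eqv_inl k 1
      fin_cases i <;> fin_cases j <;>
        simp [hB, h0, h1, Matrix.updateRow_apply, Matrix.fromBlocks,
          show (0 : Fin (k+2)) ≠ 1 by simp [Fin.ext_iff]]
    · rfl
    · -- bottom-left : rows are identity rows
      have hne0 : eqv k (Sum.inr i) ≠ 0 := by
        intro h; have := eqv_inr k i; rw [h] at this; simp at this; omega
      have hne1 : eqv k (Sum.inr i) ≠ 1 := by
        intro h; have := eqv_inr k i; rw [h] at this; simp [Fin.ext_iff] at this; omega
      have hnej : eqv k (Sum.inr i) ≠ eqv k (Sum.inl j) := by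
        intro h
        have h1 := eqv_inr k i; rw [h, eqv_inl] at h1; omega
      simp [hB, Matrix.updateRow_apply, hne0, hne1, Matrix.fromBlocks,
        Matrix.one_apply, hnej]
    · -- bottom-right
      have hne0 : eqv k (Sum.inr i) ≠ 0 := by
        intro h; have := eqv_inr k i; rw [h] at this; simp at this; omega
      have hne1 : eqv k (Sum.inr i) ≠ 1 := by
        intro h; have := eqv_inr k i; rw [h] at this; simp [Fin.ext_iff] at this; omega
      have hinj : (eqv k (Sum.inr i) = eqv k (Sum.inr j)) ↔ i = j := by
        constructor
        · intro h; have := (eqv k).injective h; simpa using this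
        · rintro rfl; rfl
      simp [hB, Matrix.updateRow_apply, hne0, hne1, Matrix.fromBlocks,
        Matrix.one_apply, hinj]
  rw [hblock, Matrix.det_fromBlocks_zero₂₁]
  simp [Matrix.det_fin_two]

/-- Column-difference/border lemma: if row 0 of `M` is all ones, then `det M` equals the
determinant of the matrix of consecutive column differences of the remaining rows. -/
lemma border_det {k : ℕ} (M : Matrix (Fin (k+1)) (Fin (k+1)) ℝ) (h1 : ∀ j, M 0 j = 1) :
    M.det = (Matrix.of fun i j : Fin k => M i.succ j.succ - M i.succ j.castSucc).det := by
  classical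
  set U : Matrix (Fin (k+1)) (Fin (k+1)) ℝ :=
    Matrix.of (fun t j => (if t = j then (1:ℝ) else 0) + (if (t:ℕ)+1 = (j:ℕ) then (-1:ℝ) else 0))
    with hUdef
  have hU : U.det = 1 := by
    rw [Matrix.det_of_upperTriangular]
    · have : ∀ t : Fin (k+1), U t t = 1 := by
        intro t; simp [hUdef]
      simp [this]
    · intro i j hij
      have hij' : (j : ℕ) < (i : ℕ) := hij
      have h1' : i ≠ j := by intro h; subst h; exact lt_irrefl _ hij'
      simp [hUdef, h1', show ¬((i:ℕ)+1 = (j:ℕ)) by omega]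
  have hMU : ∀ (i : Fin (k+1)) (j : Fin (k+1)), (j : ℕ) ≠ 0 →
      (M * U) i j = M i j - M i ⟨(j:ℕ)-1, by omega⟩ := by
    intro i j hj
    rw [Matrix.mul_apply]
    have : ∀ t : Fin (k+1), M i t * U t j
        = (if t = j then M i t else 0) + (if t = (⟨(j:ℕ)-1, by omega⟩ : Fin (k+1)) then -(M i t) else 0) := by
      intro t
      simp only [hUdef, Matrix.of_apply]
      have : ((t:ℕ)+1 = (j:ℕ)) ↔ t = (⟨(j:ℕ)-1, by omega⟩ : Fin (k+1)) := by
        rw [Fin.ext_iff]; simp; omega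
      simp only [this]
      split_ifs with hA hB hB <;> simp_all <;> try ring
    rw [Finset.sum_congr rfl (fun t _ => this t), Finset.sum_add_distrib]
    rw [Finset.sum_ite_eq' Finset.univ j (fun t => M i t)]
    rw [Finset.sum_ite_eq' Finset.univ (⟨(j:ℕ)-1, by omega⟩ : Fin (k+1)) (fun t => -(M i t))]
    simp
    ring
  have hMU0 : ∀ i : Fin (k+1), (M * U) i 0 = M i 0 := by
    intro i
    rw [Matrix.mul_apply]
    have : ∀ t : Fin (k+1), M i t * U t 0 = if t = 0 then M i t else 0 := by
      intro t
      simp only [hUdef, Matrix.of_apply]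
      split_ifs with hA hB hB <;> simp_all <;> try omega
    rw [Finset.sum_congr rfl (fun t _ => this t), Finset.sum_ite_eq' Finset.univ 0 (fun t => M i t)]
    simp
  have hdet : M.det = (M * U).det := by rw [Matrix.det_mul, hU, mul_one]
  rw [hdet, Matrix.det_succ_row_zero]
  rw [Finset.sum_eq_single 0]
  · rw [hMU0, h1]
    simp only [Fin.val_zero, pow_zero, one_mul, Fin.succAbove_zero]
    congr 1
    ext i j
    have hj : ((j.succ : Fin (k+1)) : ℕ) ≠ 0 := by simp
    rw [Matrix.submatrix_apply, hMU _ _ hj]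
    have : (⟨((j.succ : Fin (k+1)) : ℕ) - 1, by omega⟩ : Fin (k+1)) = j.castSucc := by
      apply Fin.ext; simp
    rw [this]; rfl
  · intro b _ hb
    have hb' : (b : ℕ) ≠ 0 := by
      intro h; exact hb (Fin.ext h)
    rw [hMU 0 b hb', h1, h1]
    simp
  · simp

lemma updateRow_comm' {k : ℕ} (A : Matrix (Fin k) (Fin k) ℝ) {i j : Fin k} (h : i ≠ j)
    (x y : Fin k → ℝ) :
    (A.updateRow i x).updateRow j y = (A.updateRow j y).updateRow i x := by
  ext a b
  simp only [Matrix.updateRow_apply]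
  by_cases h1 : a = j <;> by_cases h2 : a = i <;> simp_all

lemma succAbove_one_zero {k : ℕ} : (1 : Fin (k+2)).succAbove 0 = 0 := by
  rw [Fin.succAbove_of_castSucc_lt] ; · rfl
  · simp [Fin.lt_def]

lemma succAbove_one_succ {k : ℕ} (i : Fin k) :
    (1 : Fin (k+2)).succAbove i.succ = i.succ.succ := by
  rw [Fin.succAbove_of_le_castSucc]
  simp [Fin.le_def]

lemma jacobi_ne {k : ℕ} (A : Matrix (Fin (k+2)) (Fin (k+2)) ℝ) (hA : A.det ≠ 0) :
    (A.submatrix Fin.succ Fin.succ).det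
        * (A.submatrix ((1 : Fin (k+2)).succAbove) Fin.castSucc).det
      - (A.submatrix ((1 : Fin (k+2)).succAbove) Fin.succ).det
        * (A.submatrix Fin.succ Fin.castSucc).det
      = A.det * (A.submatrix (fun i : Fin k => i.succ.succ)
          (fun j : Fin k => j.succ.castSucc)).det := by
  classical
  have h01 : (0 : Fin (k+2)) ≠ 1 := by simp [Fin.ext_iff]
  set u : Fin (k+2) → ℝ := fun j => A.adjugate 0 j with hu
  set v : Fin (k+2) → ℝ := fun j => A.adjugate (Fin.last (k+1)) j with hv
  set B := ((1 : Matrix (Fin (k+2)) (Fin (k+2)) ℝ).updateRow 0 u).updateRow 1 v with hB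
  -- compute B * A
  have hBA : B * A = (A.updateRow 0 (A.det • (Pi.single 0 1 : Fin (k+2) → ℝ))).updateRow 1
      (A.det • (Pi.single (Fin.last (k+1)) 1 : Fin (k+2) → ℝ)) := by
    ext i j
    rw [Matrix.mul_apply]
    by_cases hi1 : i = 1
    · subst hi1
      have hrow : ∀ t, B 1 t = v t := by intro t; simp [hB]
      simp only [hrow]
      have : ∑ t, v t * A t j = (A.adjugate * A) (Fin.last (k+1)) j := by
        rw [Matrix.mul_apply]
      rw [this, Matrix.adjugate_mul]
      simp [Matrix.one_apply, Pi.single_apply, eq_comm]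
    · by_cases hi0 : i = 0
      · subst hi0
        have hrow : ∀ t, B 0 t = u t := by
          intro t; simp [hB, Matrix.updateRow_apply, h01]
        simp only [hrow]
        have : ∑ t, u t * A t j = (A.adjugate * A) 0 j := by
          rw [Matrix.mul_apply]
        rw [this, Matrix.adjugate_mul]
        simp [Matrix.one_apply, Pi.single_apply, eq_comm, Ne.symm h01, hi1]
      · have hrow : ∀ t, B i t = (1 : Matrix (Fin (k+2)) (Fin (k+2)) ℝ) i t := by
          intro t; simp [hB, Matrix.updateRow_apply, hi0, hi1]
        simp only [hrow]
        rw [← Matrix.mul_apply, Matrix.one_mul]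
        simp [Matrix.updateRow_apply, hi0, hi1]
  -- the matrix with basis rows
  set C := (A.updateRow 0 (Pi.single 0 1)).updateRow 1
      (Pi.single (Fin.last (k+1)) 1) with hC
  have hdetBA : (B * A).det = A.det * (A.det * C.det) := by
    rw [hBA, Matrix.det_updateRow_smul]
    congr 1
    rw [updateRow_comm' _ h01, Matrix.det_updateRow_smul, updateRow_comm' _ (Ne.symm h01)]
  -- compute det C
  have hdetC : C.det = (-1) ^ (k : ℕ)
      * (A.submatrix (fun i : Fin k => i.succ.succ) (fun j : Fin k => j.succ.castSucc)).det := by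
    rw [hC, det_updateRow_single]
    set N := ((A.updateRow 0 (Pi.single 0 1)).submatrix
        ((1 : Fin (k+2)).succAbove) ((Fin.last (k+1)).succAbove)) with hN
    have hNdet : N.det = (A.submatrix (fun i : Fin k => i.succ.succ)
        (fun j : Fin k => j.succ.castSucc)).det := by
      rw [Matrix.det_succ_row_zero, Finset.sum_eq_single 0]
      · have hN00 : N 0 0 = 1 := by
          simp [hN, succAbove_one_zero, Fin.succAbove_last]
        rw [hN00]
        simp only [Fin.val_zero, pow_zero, one_mul, Fin.succAbove_zero]
        congr 1
        ext i j
        simp only [Matrix.submatrix_apply, hN, succAbove_one_succ, Fin.succAbove_last]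
        rw [Matrix.updateRow_ne (by simp [Fin.ext_iff])]
      · intro b _ hb
        have hN0b : N 0 b = 0 := by
          simp only [hN, Matrix.submatrix_apply, succAbove_one_zero, Fin.succAbove_last,
            Matrix.updateRow_self]
          rw [Pi.single_apply]
          have hb' : (b : ℕ) ≠ 0 := fun h => hb (Fin.ext h)
          simp [Fin.ext_iff, hb']
        rw [hN0b]; ring
      · simp
    rw [hNdet]
    have : ((-1:ℝ)) ^ ((1 : Fin (k+2)) : ℕ) * ((-1:ℝ)) ^ ((Fin.last (k+1) : Fin (k+2)) : ℕ) = (-1:ℝ)^k := by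
      simp [Fin.val_last, pow_succ]
    rw [← this]
    ring
  have hdetB : B.det = u 0 * v 1 - u 1 * v 0 := det_two_rows u v
  have E1 : B.det * A.det = A.det * (A.det * C.det) := by
    rw [← Matrix.det_mul]
    exact hdetBA
  have E2 : B.det = A.det * C.det := by
    apply mul_right_cancel₀ hA
    linear_combination E1
  have hu0 : u 0 = (A.submatrix Fin.succ Fin.succ).det := by
    rw [hu]
    simp only [Matrix.adjugate_apply, det_updateRow_single]
    simp [Fin.succAbove_zero]
  have hu1 : u 1 = -((A.submatrix ((1 : Fin (k+2)).succAbove) Fin.succ).det) := by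
    rw [hu]
    simp only [Matrix.adjugate_apply, det_updateRow_single]
    simp [Fin.succAbove_zero, Fin.val_one]
  have hv0 : v 0 = (-1)^(k+1) * (A.submatrix Fin.succ Fin.castSucc).det := by
    rw [hv]
    simp only [Matrix.adjugate_apply, det_updateRow_single]
    simp [Fin.succAbove_zero, Fin.succAbove_last, Fin.val_last]
  have hv1 : v 1 = (-1)^(k+2) * (A.submatrix ((1 : Fin (k+2)).succAbove) Fin.castSucc).det := by
    have hval : ((1 : Fin (k+2)) : ℕ) + ((Fin.last (k+1)) : ℕ) = k + 2 := by
      simp [Fin.val_one, Fin.val_last]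
      omega
    rw [hv]
    show A.adjugate (Fin.last (k+1)) 1 = _
    rw [Matrix.adjugate_apply, det_updateRow_single, Fin.succAbove_last, hval]
  rw [hdetB, hu0, hu1, hv0, hv1, hdetC] at E2
  have hne : ((-1 : ℝ))^k ≠ 0 := pow_ne_zero k (by norm_num)
  apply mul_left_cancel₀ hne
  linear_combination E2

lemma jacobi {k : ℕ} (A : Matrix (Fin (k+2)) (Fin (k+2)) ℝ) :
    (A.submatrix Fin.succ Fin.succ).det
        * (A.submatrix ((1 : Fin (k+2)).succAbove) Fin.castSucc).det
      - (A.submatrix ((1 : Fin (k+2)).succAbove) Fin.succ).det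
        * (A.submatrix Fin.succ Fin.castSucc).det
      = A.det * (A.submatrix (fun i : Fin k => i.succ.succ)
          (fun j : Fin k => j.succ.castSucc)).det := by
  classical
  set Ap : Matrix (Fin (k+2)) (Fin (k+2)) (Polynomial ℝ) := Matrix.charmatrix (-A) with hAp
  have hmap : ∀ t : ℝ, Ap.map (Polynomial.eval t) = A + t • 1 := by
    intro t; ext i j
    by_cases h : i = j
    · subst h
      simp [hAp, Matrix.charmatrix_apply_eq, Matrix.one_apply]
      ring
    · simp [hAp, Matrix.charmatrix_apply_ne _ _ _ h, Matrix.one_apply, h]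
  have hsub : ∀ (t : ℝ) {a : ℕ} (f g : Fin a → Fin (k+2)),
      Polynomial.eval t ((Ap.submatrix f g).det) = ((A + t • 1).submatrix f g).det := by
    intro t a f g
    have e1 : Polynomial.eval t ((Ap.submatrix f g).det)
        = (Polynomial.evalRingHom t) ((Ap.submatrix f g).det) := rfl
    rw [e1, RingHom.map_det]
    congr 1
    ext i j
    have := congrFun (congrFun (congrArg (fun M x y => M x y) (hmap t)) (f i)) (g j)
    simpa [Matrix.map_apply] using this
  have hfull : ∀ t : ℝ, Polynomial.eval t Ap.det = (A + t • 1).det := by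
    intro t
    have e1 : Polynomial.eval t Ap.det = (Polynomial.evalRingHom t) Ap.det := rfl
    rw [e1, RingHom.map_det]
    congr 1
    ext i j
    have := congrFun (congrFun (congrArg (fun M x y => M x y) (hmap t)) i) j
    simpa [Matrix.map_apply] using this
  set P : Polynomial ℝ :=
    (Ap.submatrix Fin.succ Fin.succ).det
        * (Ap.submatrix ((1 : Fin (k+2)).succAbove) Fin.castSucc).det
      - (Ap.submatrix ((1 : Fin (k+2)).succAbove) Fin.succ).det
        * (Ap.submatrix Fin.succ Fin.castSucc).det
      - Ap.det * (Ap.submatrix (fun i : Fin k => i.succ.succ)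
          (fun j : Fin k => j.succ.castSucc)).det with hP
  have hevalP : ∀ t : ℝ, Polynomial.eval t P =
      ((A + t • 1).submatrix Fin.succ Fin.succ).det
        * ((A + t • 1).submatrix ((1 : Fin (k+2)).succAbove) Fin.castSucc).det
      - ((A + t • 1).submatrix ((1 : Fin (k+2)).succAbove) Fin.succ).det
        * ((A + t • 1).submatrix Fin.succ Fin.castSucc).det
      - (A + t • 1).det * ((A + t • 1).submatrix (fun i : Fin k => i.succ.succ)
          (fun j : Fin k => j.succ.castSucc)).det := by
    intro t
    rw [hP]
    simp only [Polynomial.eval_sub, Polynomial.eval_mul, hsub, hfull]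
  have hApdet : Ap.det ≠ 0 := by
    have : Ap.det = (-A).charpoly := rfl
    rw [this]
    exact ((-A).charpoly_monic).ne_zero
  have hPzero : P = 0 := by
    apply Polynomial.eq_zero_of_infinite_isRoot
    apply Set.Infinite.mono (s := {t : ℝ | ¬ Polynomial.IsRoot Ap.det t})
    · intro t ht
      simp only [Set.mem_setOf_eq, Polynomial.IsRoot] at ht ⊢
      rw [hevalP t]
      have hdet : (A + t • 1).det ≠ 0 := by
        rw [← hfull t]; exact ht
      have := jacobi_ne (A + t • 1) hdet
      linarith [this]
    · have : {t : ℝ | Polynomial.IsRoot Ap.det t}.Finite :=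
        Polynomial.finite_setOf_isRoot hApdet
      simpa [Set.compl_setOf] using this.infinite_compl
  have := hevalP 0
  rw [hPzero] at this
  simp only [Polynomial.eval_zero] at this
  have hA0 : A + (0:ℝ) • (1 : Matrix (Fin (k+2)) (Fin (k+2)) ℝ) = A := by
    simp
  rw [hA0] at this
  linarith [this]

theorem stmt1 (S : ℕ → ℝ) (m : ℕ) (hm : 1 ≤ m) (n : ℕ) :
    Psi m (Δ S) (n + 1) * Psi (m - 1) (Δ^[4] S) n
      - Psi m (Δ S) n * Psi (m - 1) (Δ^[4] S) (n + 1)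
      = Psi m (Δ^[2] S) n * Psi (m - 1) (Δ^[3] S) (n + 1) := by
  obtain ⟨k, rfl⟩ : ∃ k, m = k + 1 := ⟨m - 1, by omega⟩
  have hgen : ∀ (a b x : ℕ), Δ^[a] (Δ^[b] S) x = Δ^[a + b] S x := by
    intro a b x
    rw [Function.iterate_add_apply]
  have hgen1 : ∀ (a x : ℕ), Δ^[a] (Δ S) x = Δ^[a + 1] S x := by
    intro a x
    have := hgen a 1 x
    rwa [Function.iterate_one] at this
  have hdiff : ∀ (a x : ℕ), Δ^[a] S (x + 1) - Δ^[a] S x = Δ^[a+1] S x := by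
    intro a x
    rw [Function.iterate_succ_apply']
    rfl
  set A : Matrix (Fin (k+2)) (Fin (k+2)) ℝ :=
    Matrix.of (fun i j => if (i : ℕ) = 0 then (1:ℝ)
      else Δ^[2 * (i : ℕ) - 1] S (n + (j : ℕ))) with hA
  have key := jacobi A
  -- six determinant identifications
  have h_ss : (A.submatrix Fin.succ Fin.succ).det = Psi (k+1) (Δ S) (n+1) := by
    rw [Psi]
    congr 1
    ext i j
    simp only [Matrix.submatrix_apply, hA, Matrix.of_apply, Fin.val_succ]
    rw [if_neg (by omega)]
    rw [hgen1 (2 * i.val) (n + 1 + j.val)]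
    have e1 : 2 * (i.val + 1) - 1 = 2 * i.val + 1 := by omega
    have e2 : n + (j.val + 1) = n + 1 + j.val := by omega
    rw [e1, e2]
  have h_sc : (A.submatrix Fin.succ Fin.castSucc).det = Psi (k+1) (Δ S) n := by
    rw [Psi]
    congr 1
  have h_E : (A.submatrix (fun i : Fin k => i.succ.succ)
      (fun j : Fin k => j.succ.castSucc)).det = Psi k (Δ^[3] S) (n+1) := by
    rw [Psi]
    congr 1
    ext i j
    simp only [Matrix.submatrix_apply, hA, Matrix.of_apply, Fin.val_succ, Fin.coe_castSucc]
    rw [if_neg (by omega)]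
    rw [hgen (2 * i.val) 3 (n + 1 + j.val)]
    have e1 : 2 * (i.val + 1 + 1) - 1 = 2 * i.val + 3 := by omega
    have e2 : n + (j.val + 1) = n + 1 + j.val := by omega
    rw [e1, e2]
  have h_A : A.det = Psi (k+1) (Δ^[2] S) n := by
    rw [border_det A (by intro j; simp [hA])]
    rw [Psi]
    congr 1
    ext i j
    simp only [Matrix.of_apply, hA, Fin.val_succ, Fin.coe_castSucc]
    rw [if_neg (by omega), if_neg (by omega)]
    rw [hgen (2 * i.val) 2 (n + j.val)]
    have e1 : 2 * (i.val + 1) - 1 = 2 * i.val + 1 := by omega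
    rw [e1]
    have e2 : n + (j.val + 1) = (n + j.val) + 1 := by omega
    rw [e2, hdiff (2 * i.val + 1) (n + j.val)]
  have h_1c : (A.submatrix ((1 : Fin (k+2)).succAbove) Fin.castSucc).det
      = Psi k (Δ^[4] S) n := by
    rw [border_det _ (by
      intro j
      simp only [Matrix.submatrix_apply, succAbove_one_zero, hA, Matrix.of_apply]
      simp)]
    rw [Psi]
    congr 1
    ext i j
    simp only [Matrix.of_apply, Matrix.submatrix_apply, succAbove_one_succ, hA,
      Fin.val_succ, Fin.coe_castSucc]
    rw [if_neg (by omega), if_neg (by omega)]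
    rw [hgen (2 * i.val) 4 (n + j.val)]
    have e1 : 2 * (i.val + 1 + 1) - 1 = 2 * i.val + 3 := by omega
    rw [e1]
    have e2 : n + (j.val + 1) = (n + j.val) + 1 := by omega
    rw [e2, hdiff (2 * i.val + 3) (n + j.val)]
  have h_1s : (A.submatrix ((1 : Fin (k+2)).succAbove) Fin.succ).det
      = Psi k (Δ^[4] S) (n+1) := by
    rw [border_det _ (by
      intro j
      simp only [Matrix.submatrix_apply, succAbove_one_zero, hA, Matrix.of_apply]
      simp)]
    rw [Psi]
    congr 1
    ext i j
    simp only [Matrix.of_apply, Matrix.submatrix_apply, succAbove_one_succ, hA,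
      Fin.val_succ, Fin.coe_castSucc]
    rw [if_neg (by omega), if_neg (by omega)]
    rw [hgen (2 * i.val) 4 (n + 1 + j.val)]
    have e1 : 2 * (i.val + 1 + 1) - 1 = 2 * i.val + 3 := by omega
    rw [e1]
    have e2 : n + (j.val + 1 + 1) = (n + (j.val + 1)) + 1 := by omega
    rw [e2, hdiff (2 * i.val + 3) (n + (j.val + 1))]
    have e3 : n + (j.val + 1) = n + 1 + j.val := by omega
    rw [e3]
  rw [h_ss, h_sc, h_E, h_A, h_1c, h_1s] at key
  simp only [Nat.add_sub_cancel]
  linear_combination key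
end

section
/- For every integer m ≥ 1 and every n ∈ ℕ, the determinantal identity Ψ_m(Δ³S)_n · Ψ_m(S)_{n+1} − Ψ_{m−1}(Δ³S)_{n+1} · Ψ_{m+1}(S)_n = Ψ_m(Δ²S)_{n+1} · Ψ_m(ΔS)_n holds. (This is the bilinear relation F_{k+2}^n G_{k−1}^{n+1} − F_{k−1}^{n+1} G_{k+2}^n = F_{k+1}^{n+1} F_k^n of the lattice Boussinesq molecule solution in the case k = 3m+1.) -/
namespace StmtAux

open Matrix

set_option linter.unusedSectionVars false

variable {α : Type*} [CommRing α]


lemma my_updateColumn_comm {k mt : Type*} [DecidableEq k] (M : Matrix mt k α) {i j : k}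
    (h : i ≠ j) (u v : mt → α) :
    (M.updateCol i u).updateCol j v = (M.updateCol j v).updateCol i u := by
  ext a b
  simp only [Matrix.updateCol_apply]
  split_ifs with h1 h2 <;> simp_all

lemma my_mul_updateColumn {k : Type*} [Fintype k] [DecidableEq k] (A M : Matrix k k α)
    (j : k) (v : k → α) :
    A * (M.updateCol j v) = (A * M).updateCol j (A.mulVec v) := by
  ext i b
  by_cases h : b = j
  · subst h
    simp [Matrix.mul_apply, Matrix.mulVec, dotProduct]
  · simp [Matrix.mul_apply, Matrix.updateCol_ne h]

lemma my_det_updateColumn_single {n : ℕ} (A : Matrix (Fin (n+1)) (Fin (n+1)) α)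
    (i j : Fin (n+1)) :
    (A.updateCol j (Pi.single i 1)).det
      = (-1) ^ (i.val + j.val) * (A.submatrix i.succAbove j.succAbove).det := by
  have h := Matrix.adjugate_fin_succ_eq_det_submatrix Aᵀ i j
  rw [Matrix.adjugate_apply, Matrix.updateRow_transpose, Matrix.det_transpose] at h
  rw [h, add_comm]
  congr 1
  rw [← Matrix.det_transpose, Matrix.transpose_submatrix, Matrix.transpose_transpose]


/-- Upper bidiagonal column-difference matrix. -/
def Tmat (α : Type*) [CommRing α] (k : ℕ) : Matrix (Fin k) (Fin k) α :=
  Matrix.of fun i j => if i = j then 1 else if i.val + 1 = j.val then -1 else 0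

lemma det_Tmat (k : ℕ) : (Tmat α k).det = 1 := by
  have h : (Tmat α k).BlockTriangular id := by
    intro i j hij
    simp only [id_eq] at hij
    simp only [Tmat, Matrix.of_apply]
    rw [if_neg (by omega : ¬ i = j), if_neg (by omega : ¬ i.val + 1 = j.val)]
  rw [Matrix.det_of_upperTriangular h]
  apply Finset.prod_eq_one
  intro i _
  simp [Tmat]

lemma mul_Tmat_zero {k : ℕ} (M : Matrix (Fin (k+1)) (Fin (k+1)) α) (i : Fin (k+1)) :
    (M * Tmat α (k+1)) i 0 = M i 0 := by
  rw [Matrix.mul_apply]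
  rw [Finset.sum_eq_single (0 : Fin (k+1))]
  · simp [Tmat]
  · intro b _ hb
    simp only [Tmat, Matrix.of_apply]
    rw [if_neg hb, if_neg (by simp : ¬ b.val + 1 = ((0:Fin (k+1))).val)]
    ring
  · simp

lemma mul_Tmat_succ {k : ℕ} (M : Matrix (Fin (k+1)) (Fin (k+1)) α) (i : Fin (k+1))
    (j : Fin k) :
    (M * Tmat α (k+1)) i j.succ = M i j.succ - M i j.castSucc := by
  rw [Matrix.mul_apply]
  have hpt : ∀ b : Fin (k+1), M i b * Tmat α (k+1) b j.succ
      = (if b = j.succ then M i j.succ else 0) + (if b = j.castSucc then -(M i j.castSucc) else 0) := by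
    intro b
    simp only [Tmat, Matrix.of_apply]
    have hne : (j.castSucc : Fin (k+1)) ≠ j.succ := by
      simp [Fin.ext_iff]
    by_cases h1 : b = j.succ
    · subst h1
      rw [if_pos rfl, if_pos rfl, if_neg (Ne.symm hne)]
      ring
    · rw [if_neg h1, if_neg h1]
      by_cases h2 : b = j.castSucc
      · subst h2
        rw [if_pos (by simp [Fin.ext_iff]), if_pos rfl]
        ring
      · rw [if_neg (by simp only [Fin.ext_iff, Fin.val_succ, Fin.coe_castSucc] at h1 h2 ⊢; omega), if_neg h2]
        ring
  rw [Finset.sum_congr rfl (fun b _ => hpt b), Finset.sum_add_distrib]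
  rw [Finset.sum_ite_eq' Finset.univ j.succ (fun _ => M i j.succ),
      Finset.sum_ite_eq' Finset.univ j.castSucc (fun _ => -(M i j.castSucc))]
  simp [sub_eq_add_neg]

lemma det_mul_Tmat {k : ℕ} (M : Matrix (Fin k) (Fin k) α) : (M * Tmat α k).det = M.det := by
  rw [Matrix.det_mul, det_Tmat, mul_one]


/-- Equiv splitting `Fin (l+2)` as first two indices plus rest. -/
def splitE (l : ℕ) : Fin 2 ⊕ Fin l ≃ Fin (l+2) where
  toFun x := Sum.elim (fun i => (⟨i.val, by omega⟩ : Fin (l+2)))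
    (fun k => (⟨k.val + 2, by omega⟩ : Fin (l+2))) x
  invFun j := if h : j.val < 2 then Sum.inl ⟨j.val, h⟩ else Sum.inr ⟨j.val - 2, by omega⟩
  left_inv := by
    rintro (i | k)
    · simp [Fin.ext_iff]
      exact Nat.le_of_lt_succ i.isLt
    · simp
  right_inv := by
    intro j
    by_cases h : j.val < 2
    · simp [h]
    · simp only [h, dif_neg, not_false_iff]
      simp only [Fin.ext_iff, Sum.elim_inr]
      omega

lemma det_double_update {l : ℕ} (u v : Fin (l+2) → α) :
    ((((1 : Matrix (Fin (l+2)) (Fin (l+2)) α).updateCol 0 u).updateCol 1 v)).det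
      = u 0 * v 1 - u 1 * v 0 := by
  set B := (((1 : Matrix (Fin (l+2)) (Fin (l+2)) α).updateCol 0 u).updateCol 1 v) with hB
  have hBapp : ∀ a b, B a b = if b = 1 then v a else if b = 0 then u a
      else (1 : Matrix (Fin (l+2)) (Fin (l+2)) α) a b := by
    intro a b
    rw [hB, Matrix.updateCol_apply, Matrix.updateCol_apply]
  rw [← Matrix.det_submatrix_equiv_self (splitE l) B]
  have hblock : B.submatrix (splitE l) (splitE l)
      = Matrix.fromBlocks !![u 0, v 0; u 1, v 1] 0
          (Matrix.of fun (k : Fin l) (j : Fin 2) =>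
            if j = 0 then u ⟨k.val + 2, by omega⟩ else v ⟨k.val + 2, by omega⟩)
          (1 : Matrix (Fin l) (Fin l) α) := by
    ext x y
    rcases x with x | x <;> rcases y with y | y
    · fin_cases x <;> fin_cases y
      all_goals simp only [Matrix.submatrix_apply, splitE, Equiv.coe_fn_mk, Sum.elim_inl, Sum.elim_inr, Matrix.fromBlocks_apply₁₁, hBapp]
      all_goals simp [Fin.ext_iff, Matrix.one_apply]
    · -- rows 0,1, columns k+2 : should be 0
      fin_cases x
      all_goals simp only [Matrix.submatrix_apply, splitE, Equiv.coe_fn_mk, Sum.elim_inl, Sum.elim_inr, Matrix.fromBlocks_apply₁₂, hBapp]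
      all_goals simp [Fin.ext_iff, Matrix.one_apply]
    · -- rows k+2, columns 0,1
      fin_cases y
      all_goals simp only [Matrix.submatrix_apply, splitE, Equiv.coe_fn_mk, Sum.elim_inl, Sum.elim_inr, Matrix.fromBlocks_apply₂₁, hBapp]
      · have h1 : ((⟨0, by omega⟩ : Fin (l+2)) = 1) ↔ False := by simp [Fin.ext_iff]
        have h0 : ((⟨0, by omega⟩ : Fin (l+2)) = 0) ↔ True := by simp [Fin.ext_iff]
        simp only [h1, h0, if_false, if_true, Matrix.of_apply]
        rfl
      · have h1 : ((⟨1, by omega⟩ : Fin (l+2)) = 1) ↔ True := by simp [Fin.ext_iff]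
        simp only [h1, if_true, Matrix.of_apply]
        rfl
    · -- identity block
      simp only [Matrix.submatrix_apply, splitE, Equiv.coe_fn_mk, Sum.elim_inl, Sum.elim_inr, Matrix.fromBlocks_apply₂₂, hBapp]
      simp [Fin.ext_iff, Matrix.one_apply]
  rw [hblock, Matrix.det_fromBlocks_zero₁₂, Matrix.det_one, mul_one, Matrix.det_fin_two_of]
  ring

lemma jacobi_domain {α : Type*} [CommRing α] [IsDomain α] (l : ℕ)
    (C : Matrix (Fin (l+2)) (Fin (l+2)) α) (hC : C.det ≠ 0) :
    (C.submatrix Fin.succ Fin.succ).det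
        * (C.submatrix Fin.castSucc ((1 : Fin (l+2)).succAbove)).det
      - (C.submatrix Fin.succ ((1 : Fin (l+2)).succAbove)).det
        * (C.submatrix Fin.castSucc Fin.succ).det
      = C.det * (C.submatrix (fun k : Fin l => k.succ.castSucc)
          (fun k : Fin l => (1 : Fin (l+2)).succAbove k.succ)).det := by
  set d := C.det with hd
  set u : Fin (l+2) → α := fun k => C.adjugate k 0 with hu
  set v : Fin (l+2) → α := fun k => C.adjugate k (Fin.last (l+1)) with hv
  set B := (((1 : Matrix (Fin (l+2)) (Fin (l+2)) α).updateCol 0 u).updateCol 1 v) with hB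
  -- C.mulVec of adjugate columns
  have hmv : ∀ x : Fin (l+2), C.mulVec (fun k => C.adjugate k x) = Pi.single x d := by
    intro x
    funext k
    have : C.mulVec (fun k => C.adjugate k x) k = (C * C.adjugate) k x := by
      simp [Matrix.mulVec, dotProduct, Matrix.mul_apply]
    rw [this, Matrix.mul_adjugate]
    simp [Matrix.one_apply, Pi.single_apply]
    rfl
  -- Step 1: C * B explicitly
  have h1 : C * B = (C.updateCol 0 (Pi.single 0 d)).updateCol 1
      (Pi.single (Fin.last (l+1)) d) := by
    rw [hB, my_mul_updateColumn, my_mul_updateColumn, Matrix.mul_one, hmv, hmv]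
  -- scalar extraction
  have hsingle : ∀ (x : Fin (l+2)), (Pi.single x d : Fin (l+2) → α) = d • (Pi.single x 1 : Fin (l+2) → α) := by
    intro x
    funext k
    simp [Pi.single_apply]
  -- Step 2: determinant of C * B
  have h2 : (C * B).det = d * (d * ((-1)^(l+1+1) *
      (C.submatrix ((Fin.last (l+1)).succAbove ∘ Fin.succ)
        (((1 : Fin (l+2)).succAbove) ∘ Fin.succ)).det)) := by
    rw [h1, hsingle, hsingle, Matrix.det_updateCol_smul,
        my_updateColumn_comm _ (by simp : (0 : Fin (l+2)) ≠ 1),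
        Matrix.det_updateCol_smul,
        my_updateColumn_comm _ (by simp : (1 : Fin (l+2)) ≠ 0)]
    congr 1
    congr 1
    -- det ((C.upd 0 s0).upd 1 sLast)
    have e1 := my_det_updateColumn_single (n := l+1)
      ((C.updateCol 0 (Pi.single 0 1))) (Fin.last (l+1)) 1
    rw [e1]
    have hsub : (C.updateCol 0 (Pi.single 0 1)).submatrix
          (Fin.last (l+1)).succAbove ((1 : Fin (l+2)).succAbove)
        = (C.submatrix (Fin.last (l+1)).succAbove
            ((1 : Fin (l+2)).succAbove)).updateCol 0 (Pi.single 0 1) := by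
      ext i j
      by_cases hj : j = 0
      · subst hj
        rw [Matrix.submatrix_apply, Fin.one_succAbove_zero, Matrix.updateCol_self,
            Matrix.updateCol_self, Fin.succAbove_last]
        simp [Pi.single_apply]
      · have : (1 : Fin (l+2)).succAbove j ≠ 0 := by
          rw [← Fin.one_succAbove_zero (n := l)]
          exact fun hcon => hj (Fin.succAbove_right_injective hcon)
        rw [Matrix.submatrix_apply, Matrix.updateCol_ne this, Matrix.updateCol_ne hj,
            Matrix.submatrix_apply]
    rw [hsub]
    have e2 := my_det_updateColumn_single (n := l)
      ((C.submatrix (Fin.last (l+1)).succAbove ((1 : Fin (l+2)).succAbove))) 0 0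
    rw [e2]
    simp only [Fin.val_last, Fin.val_one, Fin.val_zero, pow_zero, one_mul,
      Fin.succAbove_zero, Matrix.submatrix_submatrix]
    norm_num
  -- Step 3: determinant of B
  have h3 : B.det = u 0 * v 1 - u 1 * v 0 := det_double_update u v
  -- Main equation
  have main : d * B.det = (C * B).det := by rw [Matrix.det_mul, hd]
  rw [h2, h3] at main
  -- adjugate entries as minors
  have a00 : u 0 = (C.submatrix Fin.succ Fin.succ).det := by
    show C.adjugate 0 0 = _
    rw [Matrix.adjugate_fin_succ_eq_det_submatrix]
    simp [Fin.succAbove_zero]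
  have a1L : v 1 = (-1)^(l+1+1) * (C.submatrix Fin.castSucc ((1 : Fin (l+2)).succAbove)).det := by
    show C.adjugate 1 (Fin.last (l+1)) = _
    rw [Matrix.adjugate_fin_succ_eq_det_submatrix]
    rw [Fin.succAbove_last]
    simp [Fin.val_last]
  have a10 : u 1 = (-1)^(0+1) * (C.submatrix Fin.succ ((1 : Fin (l+2)).succAbove)).det := by
    show C.adjugate 1 0 = _
    rw [Matrix.adjugate_fin_succ_eq_det_submatrix]
    simp [Fin.succAbove_zero]
  have a0L : v 0 = (-1)^(l+1) * (C.submatrix Fin.castSucc Fin.succ).det := by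
    show C.adjugate 0 (Fin.last (l+1)) = _
    rw [Matrix.adjugate_fin_succ_eq_det_submatrix]
    rw [Fin.succAbove_last, Fin.succAbove_zero]
    simp [Fin.val_last]
  rw [a00, a1L, a10, a0L] at main
  -- rewrite the inner submatrix maps
  have hmaps : (C.submatrix ((Fin.last (l+1)).succAbove ∘ Fin.succ)
        (((1 : Fin (l+2)).succAbove) ∘ Fin.succ))
      = (C.submatrix (fun k : Fin l => k.succ.castSucc)
          (fun k : Fin l => (1 : Fin (l+2)).succAbove k.succ)) := by
    ext i j
    simp [Fin.succAbove_last]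
  rw [hmaps] at main
  -- cancellation
  have heps : ((-1 : α) ^ l) ≠ 0 := pow_ne_zero _ (by norm_num)
  apply mul_left_cancel₀ hC
  apply mul_left_cancel₀ heps
  linear_combination main

lemma jacobi {α : Type*} [CommRing α] (l : ℕ)
    (C : Matrix (Fin (l+2)) (Fin (l+2)) α) :
    (C.submatrix Fin.succ Fin.succ).det
        * (C.submatrix Fin.castSucc ((1 : Fin (l+2)).succAbove)).det
      - (C.submatrix Fin.succ ((1 : Fin (l+2)).succAbove)).det
        * (C.submatrix Fin.castSucc Fin.succ).det
      = C.det * (C.submatrix (fun k : Fin l => k.succ.castSucc)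
          (fun k : Fin l => (1 : Fin (l+2)).succAbove k.succ)).det := by
  set X := Matrix.mvPolynomialX (Fin (l+2)) (Fin (l+2)) ℤ with hX
  have key := jacobi_domain l X (Matrix.det_mvPolynomialX_ne_zero _ ℤ)
  set φ : MvPolynomial (Fin (l+2) × Fin (l+2)) ℤ →+* α :=
    MvPolynomial.eval₂Hom (Int.castRingHom α) (fun p => C p.1 p.2) with hφ
  have hXC : X.map φ = C := by
    rw [hφ, MvPolynomial.coe_eval₂Hom]
    exact Matrix.mvPolynomialX_map_eval₂ _ C
  have key2 := congrArg φ key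
  simp only [map_sub, _root_.map_mul, RingHom.map_det, RingHom.mapMatrix_apply, ← Matrix.submatrix_map] at key2
  rw [hXC] at key2
  exact key2

lemma split_det (l : ℕ) (A : Matrix (Fin (l+2)) (Fin (l+2)) α) (f : Fin (l+1) → Fin (l+2)) :
    (A.submatrix f Fin.succ).det
      = ((A * Tmat α (l+2)).submatrix f ((1 : Fin (l+2)).succAbove)).det
        + ((A * Tmat α (l+2)).submatrix f Fin.succ).det := by
  set C := A * Tmat α (l+2) with hC
  have c0 : ∀ i, C i 0 = A i 0 := fun i => mul_Tmat_zero A i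
  have cs : ∀ i (j : Fin (l+1)), C i j.succ = A i j.succ - A i j.castSucc :=
    fun i j => mul_Tmat_succ A i j
  have hdet : (A.submatrix f Fin.succ).det = ((A.submatrix f Fin.succ) * Tmat α (l+1)).det :=
    (det_mul_Tmat _).symm
  rw [hdet]
  have hE : (A.submatrix f Fin.succ) * Tmat α (l+1)
      = (C.submatrix f Fin.succ).updateCol 0 (fun i => A (f i) 1) := by
    ext i j
    rcases Fin.eq_zero_or_eq_succ j with hj | ⟨k, hj⟩
    · subst hj
      rw [mul_Tmat_zero, Matrix.updateCol_self, Matrix.submatrix_apply, Fin.succ_zero_eq_one]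
    · subst hj
      rw [mul_Tmat_succ, Matrix.updateCol_ne (Fin.succ_ne_zero k),
          Matrix.submatrix_apply, Matrix.submatrix_apply, Matrix.submatrix_apply, cs,
          Fin.succ_castSucc]
  rw [hE]
  have hcol : (fun i => A (f i) 1) = (fun i => A (f i) 0) + (fun i => C (f i) 1) := by
    funext i
    have h := cs (f i) 0
    rw [Fin.succ_zero_eq_one, Fin.castSucc_zero] at h
    simp only [Pi.add_apply]
    rw [h]; ring
  rw [hcol, Matrix.det_updateCol_add]
  congr 1
  · congr 1
    ext i j
    rcases Fin.eq_zero_or_eq_succ j with hj | ⟨k, hj⟩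
    · subst hj
      rw [Matrix.updateCol_self, Matrix.submatrix_apply, Fin.one_succAbove_zero, c0]
    · subst hj
      rw [Matrix.updateCol_ne (Fin.succ_ne_zero k), Matrix.submatrix_apply,
          Matrix.submatrix_apply, Fin.one_succAbove_succ]
  · congr 1
    ext i j
    rcases Fin.eq_zero_or_eq_succ j with hj | ⟨k, hj⟩
    · subst hj
      rw [Matrix.updateCol_self, Matrix.submatrix_apply, Fin.succ_zero_eq_one]
    · subst hj
      rw [Matrix.updateCol_ne (Fin.succ_ne_zero k)]

end StmtAux

open StmtAux in
theorem stmt4 (S : ℕ → ℝ) (m : ℕ) (hm : 1 ≤ m) (n : ℕ) :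
    Psi m (Δ^[3] S) n * Psi m S (n + 1)
      - Psi (m - 1) (Δ^[3] S) (n + 1) * Psi (m + 1) S n
      = Psi m (Δ^[2] S) (n + 1) * Psi m (Δ S) n := by
  obtain ⟨l, rfl⟩ : ∃ l, m = l + 1 := ⟨m - 1, by omega⟩
  -- iteration helpers
  have hit : ∀ (a : ℕ) (g : ℕ → ℝ) (x : ℕ), Δ^[a] (Δ g) x = Δ^[a] g (x+1) - Δ^[a] g x := by
    intro a g x
    have h : Δ^[a] (Δ g) = Δ (Δ^[a] g) := by
      have h1 : Δ^[a] (Δ g) = Δ^[a + 1] g := by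
        rw [Function.iterate_add_apply, Function.iterate_one]
      have h2 : Δ (Δ^[a] g) = Δ^[1 + a] g := by
        rw [Function.iterate_add_apply, Function.iterate_one]
      rw [h1, h2, add_comm]
    rw [h]; rfl
  have hit2 : ∀ (a : ℕ) (x : ℕ), Δ^[a] (Δ^[2] S) x = Δ^[a+2] S x := by
    intro a x; rw [Function.iterate_add_apply]
  have hit3 : ∀ (g : ℕ → ℝ), Δ^[3] g = Δ (Δ^[2] g) := by
    intro g
    rw [show (3:ℕ) = 1 + 2 by rfl, Function.iterate_add_apply, Function.iterate_one]
  have hDS : ∀ (a b x y : ℕ), a = b → x = y → Δ^[a] S x = Δ^[b] S y := by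
    rintro a b x y rfl rfl; rfl
  set A : Matrix (Fin (l+2)) (Fin (l+2)) ℝ :=
    Matrix.of (fun i j : Fin (l+2) => (Δ^[2 * i.val] S) (n + j.val)) with hA
  set C := A * Tmat ℝ (l+2) with hC
  have c0 : ∀ i, C i 0 = A i 0 := fun i => mul_Tmat_zero A i
  have cs : ∀ i (j : Fin (l+1)), C i j.succ = A i j.succ - A i j.castSucc :=
    fun i j => mul_Tmat_succ A i j
  -- the C entries in terms of S
  have csE : ∀ (i : Fin (l+2)) (j : Fin (l+1)),
      C i j.succ = Δ^[2 * i.val] S (n + j.val + 1) - Δ^[2 * i.val] S (n + j.val) := by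
    intro i j
    rw [cs]
    show Δ^[2 * i.val] S (n + (j.val+1)) - Δ^[2 * i.val] S (n + j.val) = _
    congr 2
  -- Psi identifications
  have P1 : Psi (l+1+1) S n = A.det := rfl
  have PdetAC : A.det = C.det := (det_mul_Tmat A).symm
  have P2 : Psi (l+1) (Δ S) n = (C.submatrix Fin.castSucc Fin.succ).det := by
    unfold Psi
    congr 1
    ext i j
    rw [Matrix.of_apply, Matrix.submatrix_apply, csE]
    rw [hit]
    simp only [Fin.coe_castSucc]
  have P5 : Psi (l+1) (Δ^[3] S) n = (C.submatrix Fin.succ Fin.succ).det := by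
    unfold Psi
    congr 1
    ext i j
    rw [Matrix.of_apply, Matrix.submatrix_apply, csE]
    rw [hit3, hit, hit2, hit2]
    simp only [Fin.val_succ]
    congr 1 <;> exact hDS _ _ _ _ (by omega) (by omega)
  have P6 : Psi l (Δ^[3] S) (n+1)
      = (C.submatrix (fun k : Fin l => k.succ.castSucc)
          (fun k : Fin l => (1 : Fin (l+2)).succAbove k.succ)).det := by
    unfold Psi
    congr 1
    ext i j
    rw [Matrix.of_apply, Matrix.submatrix_apply, Fin.one_succAbove_succ, csE]
    rw [hit3, hit, hit2, hit2]
    simp only [Fin.val_succ, Fin.coe_castSucc]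
    congr 1 <;> exact hDS _ _ _ _ (by omega) (by omega)
  -- split ones
  have P4 : Psi (l+1) S (n+1)
      = (C.submatrix Fin.castSucc ((1 : Fin (l+2)).succAbove)).det
        + (C.submatrix Fin.castSucc Fin.succ).det := by
    have hsp := split_det l A Fin.castSucc
    rw [← hC] at hsp
    rw [← hsp]
    unfold Psi
    congr 1
    ext i j
    rw [Matrix.of_apply, Matrix.submatrix_apply, hA, Matrix.of_apply]
    simp only [Fin.coe_castSucc, Fin.val_succ]
    exact hDS _ _ _ _ (by omega) (by omega)
  have P3 : Psi (l+1) (Δ^[2] S) (n+1)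
      = (C.submatrix Fin.succ ((1 : Fin (l+2)).succAbove)).det
        + (C.submatrix Fin.succ Fin.succ).det := by
    have hsp := split_det l A Fin.succ
    rw [← hC] at hsp
    rw [← hsp]
    unfold Psi
    congr 1
    ext i j
    rw [Matrix.of_apply, Matrix.submatrix_apply, hA, Matrix.of_apply]
    rw [hit2]
    simp only [Fin.val_succ]
    exact hDS _ _ _ _ (by omega) (by omega)
  have hjac := jacobi l C
  have hm1 : l + 1 - 1 = l := rfl
  rw [hm1, P1, P2, P3, P4, P5, P6, PdetAC]
  linear_combination hjac
end

section
/- For every integer m ≥ 1 and every n ∈ ℕ, the determinantal identity Ψ_m(ΔS)_{n+1} · Ψ_m(Δ⁴S)_n − Ψ_{m+1}(ΔS)_n · Ψ_{m−1}(Δ⁴S)_{n+1} = Ψ_m(Δ³S)_{n+1} · Ψ_m(Δ²S)_n holds. (This is the bilinear relation F_{k+2}^n G_{k−1}^{n+1} − F_{k−1}^{n+1} G_{k+2}^n = F_{k+1}^{n+1} F_k^n of the lattice Boussinesq molecule solution in the case k = 3m+2.) -/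
lemma delta_eq_fwdDiff : Δ = fwdDiff (1 : ℕ) := rfl

lemma delta_shift (v : ℕ → ℝ) (a n : ℕ) :
    (Δ^[a] v) (n + 1) = (Δ^[a] v) n + (Δ^[a + 1] v) n := by
  have h : Δ^[a + 1] v = Δ (Δ^[a] v) := Function.iterate_succ_apply' Δ a v
  rw [h]
  simp [Δ]

lemma delta_binom (v : ℕ → ℝ) (a n j : ℕ) :
    (Δ^[a] v) (n + j) = ∑ t ∈ Finset.range (j + 1), (j.choose t : ℝ) * (Δ^[a + t] v) n := by
  have h := shift_eq_sum_fwdDiff_iter (1 : ℕ) (Δ^[a] v) j n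
  simp only [smul_eq_mul, mul_one, ← delta_eq_fwdDiff, nsmul_eq_mul] at h
  rw [h]
  refine Finset.sum_congr rfl fun t _ => ?_
  rw [← Function.iterate_add_apply, add_comm t a]

lemma psi_eq (k : ℕ) (v : ℕ → ℝ) (n : ℕ) :
    Psi k v n = (Matrix.of fun i j : Fin k => (Δ^[2 * i.val + j.val] v) n).det := by
  have hM : (Matrix.of fun i j : Fin k => (Δ^[2 * i.val] v) (n + j.val))
      = (Matrix.of fun i t : Fin k => (Δ^[2 * i.val + t.val] v) n)
        * (Matrix.of fun t j : Fin k => ((j.val).choose t.val : ℝ)) := by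
    ext i j
    simp only [Matrix.mul_apply, Matrix.of_apply]
    rw [delta_binom v (2 * i.val) n j.val]
    have h1 : ∑ t ∈ Finset.range (j.val + 1), ((j.val).choose t : ℝ) * (Δ^[2 * i.val + t] v) n
        = ∑ t ∈ Finset.range k, ((j.val).choose t : ℝ) * (Δ^[2 * i.val + t] v) n := by
      refine Finset.sum_subset (by simp [Nat.succ_le_of_lt j.isLt]) fun x _ hx => ?_
      have : j.val < x := by simp at hx; omega
      simp [Nat.choose_eq_zero_of_lt this]
    rw [h1, ← Fin.sum_univ_eq_sum_range (fun t => ((j.val).choose t : ℝ) * (Δ^[2 * i.val + t] v) n) k]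
    exact Finset.sum_congr rfl fun t _ => mul_comm _ _
  unfold Psi
  rw [hM, Matrix.det_mul]
  have hU : (Matrix.of fun t j : Fin k => ((j.val).choose t.val : ℝ)).det = 1 := by
    rw [Matrix.det_of_upperTriangular]
    · simp
    · intro i j hij
      simp only [Matrix.of_apply]
      have : (j : Fin k) < i := hij
      exact_mod_cast congrArg (Nat.cast (R := ℝ)) (Nat.choose_eq_zero_of_lt this)
  rw [hU, mul_one]


lemma det_updateRow_sum' {q : ℕ} (A : Matrix (Fin q) (Fin q) ℝ) (r : Fin q)
    {ι : Type} (s : Finset ι) (c : ι → ℝ) (u : ι → Fin q → ℝ) :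
    (A.updateRow r (fun j => ∑ x ∈ s, c x * u x j)).det
      = ∑ x ∈ s, c x * (A.updateRow r (u x)).det := by
  classical
  induction s using Finset.induction with
  | empty =>
      simp only [Finset.sum_empty]
      exact Matrix.det_eq_zero_of_row_eq_zero r (fun j => by simp)
  | insert _ _ hx ih =>
      rename_i a s'
      rw [Finset.sum_insert hx,
        show (fun j => ∑ x ∈ insert a s', c x * u x j)
          = (c a • u a + fun j => ∑ x ∈ s', c x * u x j) from
            funext fun j => Finset.sum_insert hx,
        Matrix.det_updateRow_add, Matrix.det_updateRow_smul, ih]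

lemma lemmaD (k s : ℕ) (h : Fin k → Fin (k + 1) → ℝ) (B : Matrix (Fin (k + 1)) (Fin (k + 1)) ℝ)
    (hB1 : ∀ (i : Fin k) (c : Fin (k + 1)), B i.castSucc c = h i c)
    (hB2 : ∀ c : Fin (k + 1), B (Fin.last k) c = (-1 : ℝ) ^ ((c : ℕ) + s)) :
    B.det = (-1 : ℝ) ^ (k + s) *
      (Matrix.of fun i j : Fin k => h i j.castSucc + h i j.succ).det := by
  classical
  set T : Matrix (Fin (k + 1)) (Fin (k + 1)) ℝ :=
    Matrix.of fun a b => (if b = a then (1 : ℝ) else 0) + (if (b : ℕ) = (a : ℕ) + 1 then 1 else 0)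
    with hT
  have hTdet : T.det = 1 := by
    rw [Matrix.det_of_upperTriangular]
    · have hd : ∀ a : Fin (k + 1), T a a = 1 := by
        intro a
        show (if a = a then (1 : ℝ) else 0) + (if (a : ℕ) = (a : ℕ) + 1 then 1 else 0) = 1
        rw [if_pos rfl, if_neg (by omega)]
        norm_num
      simp [hd]
    · intro a b hba
      have hba' : (b : ℕ) < (a : ℕ) := hba
      show (if b = a then (1 : ℝ) else 0) + (if (b : ℕ) = (a : ℕ) + 1 then 1 else 0) = 0
      rw [if_neg (by rw [Fin.ext_iff]; omega), if_neg (by omega)]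
      ring
  set C : Matrix (Fin (k + 1)) (Fin (k + 1)) ℝ := B * T with hC
  have hCdet : C.det = B.det := by rw [hC, Matrix.det_mul, hTdet, mul_one]
  have hC0 : ∀ x, C x 0 = B x 0 := by
    intro x
    simp only [hC, Matrix.mul_apply, hT, Matrix.of_apply]
    rw [Finset.sum_eq_single (0 : Fin (k + 1))]
    · rw [if_pos rfl, if_neg (by omega)]; ring
    · intro b _ hb
      rw [if_neg (fun hh => hb hh.symm), if_neg (by simp), add_zero, mul_zero]
    · simp
  have hCs : ∀ x (j : Fin k), C x j.succ = B x j.castSucc + B x j.succ := by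
    intro x j
    simp only [hC, Matrix.mul_apply, hT, Matrix.of_apply]
    rw [Finset.sum_eq_add_of_mem j.castSucc j.succ (Finset.mem_univ _) (Finset.mem_univ _)
      (by rw [ne_eq, Fin.ext_iff]; simp only [Fin.coe_castSucc, Fin.val_succ]; omega) ?_]
    · rw [if_neg (by rw [Fin.ext_iff]; simp only [Fin.coe_castSucc, Fin.val_succ]; omega),
        if_pos (by simp only [Fin.coe_castSucc, Fin.val_succ]), if_pos rfl,
        if_neg (by simp only [Fin.val_succ]; omega)]
      ring
    · intro b _ hb
      obtain ⟨hb1, hb2⟩ := hb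
      rw [if_neg (fun hh => hb2 hh.symm), if_neg ?_, add_zero, mul_zero]
      intro hh
      apply hb1
      rw [Fin.ext_iff]
      simp at hh ⊢
      omega
  have hrow : ∀ j : Fin (k + 1), C (Fin.last k) j = if j = 0 then (-1 : ℝ) ^ s else 0 := by
    intro j
    rcases Fin.eq_zero_or_eq_succ j with rfl | ⟨j', rfl⟩
    · rw [if_pos rfl, hC0, hB2]
      simp
    · rw [if_neg (Fin.succ_ne_zero j'), hCs, hB2, hB2]
      simp only [Fin.coe_castSucc, Fin.val_succ]
      rw [show (j' : ℕ) + 1 + s = ((j' : ℕ) + s) + 1 by omega, pow_succ]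
      ring
  have hexp := Matrix.det_succ_row C (Fin.last k)
  rw [Finset.sum_eq_single (0 : Fin (k + 1))] at hexp
  · rw [hCdet] at hexp
    rw [hexp, hrow 0, if_pos rfl]
    have hsub : C.submatrix (Fin.last k).succAbove (0 : Fin (k + 1)).succAbove
        = Matrix.of fun i j : Fin k => h i j.castSucc + h i j.succ := by
      ext i j
      simp only [Matrix.submatrix_apply, Fin.succAbove_last, Fin.succAbove_zero]
      rw [hCs, hB1, hB1]
      rfl
    rw [hsub]
    simp only [Fin.val_last, Fin.val_zero, add_zero, pow_add]
  · intro b _ hb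
    rw [hrow b, if_neg hb]
    ring
  · intro hh
    exact absurd (Finset.mem_univ (0 : Fin (k + 1))) hh

lemma succAbove_val {q : ℕ} (x : Fin (q + 1)) (i : Fin q) :
    ((x.succAbove i : Fin (q + 1)) : ℕ) = if (i : ℕ) < (x : ℕ) then (i : ℕ) else (i : ℕ) + 1 := by
  rw [Fin.succAbove]
  split_ifs with h1 h2 h3
  · simp
  · exact absurd (by simpa [Fin.lt_def] using h1) h2
  · exact absurd (by simpa [Fin.lt_def] using h3) h1
  · simp

lemma keyB (p : ℕ) (f g : ℕ → ℝ) (hg : ∀ r, g r = f r + f (r + 1)) :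
    (Matrix.of fun i j : Fin (p + 1) => g (2 * i.val + j.val + 1)).det *
      (Matrix.of fun i j : Fin (p + 1) => f (2 * i.val + j.val + 4)).det -
      (Matrix.of fun i j : Fin (p + 2) => f (2 * i.val + j.val + 1)).det *
      (Matrix.of fun i j : Fin p => g (2 * i.val + j.val + 4)).det
    = (Matrix.of fun i j : Fin (p + 1) => g (2 * i.val + j.val + 3)).det *
      (Matrix.of fun i j : Fin (p + 1) => f (2 * i.val + j.val + 2)).det := by
  classical
  set q : ℝ := (-1 : ℝ) ^ p with hqdef
  have hq : q * q = 1 := by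
    rw [hqdef, ← pow_add, ← two_mul, pow_mul]
    norm_num
  set N : Matrix (Fin (p + 3)) (Fin (p + 2)) ℝ :=
    Matrix.of fun x c =>
      if (x : ℕ) < p + 2 then f (2 * (x : ℕ) + (c : ℕ) + 1) else (-1 : ℝ) ^ ((c : ℕ) + 1)
    with hNdef
  have hN : ∀ (x : Fin (p + 3)) (c : Fin (p + 2)),
      N x c = if (x : ℕ) < p + 2 then f (2 * (x : ℕ) + (c : ℕ) + 1)
        else (-1 : ℝ) ^ ((c : ℕ) + 1) := fun x c => rfl
  set D : Fin (p + 3) → ℝ := fun x => (N.submatrix x.succAbove id).det with hDdef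
  -- key vector identity
  have key : ∀ c : Fin (p + 2), ∑ x : Fin (p + 3), (-1 : ℝ) ^ (x : ℕ) * D x * N x c = 0 := by
    intro c
    set P : Matrix (Fin (p + 3)) (Fin (p + 3)) ℝ :=
      Matrix.of fun x y => if hy : (y : ℕ) < p + 2 then N x ⟨(y : ℕ), hy⟩ else N x c with hPdef
    have hPlast : ∀ x, P x (Fin.last (p + 2)) = N x c := by
      intro x
      show (if hy : ((Fin.last (p + 2) : Fin (p + 3)) : ℕ) < p + 2 then _ else N x c) = N x c
      rw [dif_neg (by simp)]
    have hP0 : P.det = 0 := by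
      apply Matrix.det_zero_of_column_eq (i := (c.castSucc : Fin (p + 3))) (j := Fin.last (p + 2))
        (Fin.ne_of_lt (Fin.castSucc_lt_last c))
      intro x
      rw [hPlast]
      show (if hy : ((c.castSucc : Fin (p + 3)) : ℕ) < p + 2 then N x ⟨_, hy⟩ else N x c) = N x c
      rw [dif_pos (by simp [c.isLt])]
      exact congrArg (N x) (Fin.ext (by simp))
    have hsub : ∀ x : Fin (p + 3),
        P.submatrix x.succAbove (Fin.last (p + 2)).succAbove = N.submatrix x.succAbove id := by
      intro x
      ext i j
      simp only [Matrix.submatrix_apply, Fin.succAbove_last, id_eq]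
      show (if hy : ((j.castSucc : Fin (p + 3)) : ℕ) < p + 2 then N _ ⟨_, hy⟩ else N _ c) = N _ j
      rw [dif_pos (by simp [j.isLt])]
      exact congrArg (N _) (Fin.ext (by simp))
    have hexp := Matrix.det_succ_column P (Fin.last (p + 2))
    rw [hP0] at hexp
    have h0 : ∑ x : Fin (p + 3), (-1 : ℝ) ^ ((x : ℕ) + (p + 2)) * N x c * D x = 0 := by
      refine Eq.trans ?_ hexp.symm
      refine Finset.sum_congr rfl fun x _ => ?_
      rw [hPlast, hsub x, Fin.val_last]
    have h2 : (-1 : ℝ) ^ (p + 2) * (-1 : ℝ) ^ (p + 2) = 1 := by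
      rw [← pow_add, ← two_mul, pow_mul]; norm_num
    have h1 := congrArg (fun z : ℝ => (-1 : ℝ) ^ (p + 2) * z) h0
    simp only [mul_zero] at h1
    rw [Finset.mul_sum] at h1
    refine Eq.trans (Finset.sum_congr rfl fun x _ => ?_) h1
    rw [pow_add]
    linear_combination (-((-1 : ℝ) ^ (x : ℕ) * D x * N x c)) * h2
  -- abbreviations for the six determinants
  set G1 : ℝ := (Matrix.of fun i j : Fin (p + 1) => g (2 * i.val + j.val + 1)).det with hG1
  set F4 : ℝ := (Matrix.of fun i j : Fin (p + 1) => f (2 * i.val + j.val + 4)).det with hF4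
  set F1 : ℝ := (Matrix.of fun i j : Fin (p + 2) => f (2 * i.val + j.val + 1)).det with hF1
  set G4 : ℝ := (Matrix.of fun i j : Fin p => g (2 * i.val + j.val + 4)).det with hG4
  set G3 : ℝ := (Matrix.of fun i j : Fin (p + 1) => g (2 * i.val + j.val + 3)).det with hG3
  set F2 : ℝ := (Matrix.of fun i j : Fin (p + 1) => f (2 * i.val + j.val + 2)).det with hF2
  have epow2 : (-1 : ℝ) ^ (p + 2) = q := by rw [hqdef, pow_add]; norm_num
  have epow1 : (-1 : ℝ) ^ (p + 1) = -q := by rw [hqdef, pow_add]; norm_num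
  -- evaluate D at the three special rows
  have hDlast : D (Fin.last (p + 2)) = F1 := by
    simp only [hDdef]
    rw [hF1]
    congr 1
    ext i j
    simp only [Matrix.submatrix_apply, Fin.succAbove_last, id_eq, Matrix.of_apply]
    rw [hN, if_pos (by simpa using i.isLt)]
    simp
  have hD1 : D (⟨p + 1, by omega⟩ : Fin (p + 3)) = q * G1 := by
    have hB1 : ∀ (i : Fin (p + 1)) (c : Fin (p + 2)),
        (N.submatrix (⟨p + 1, by omega⟩ : Fin (p + 3)).succAbove id) i.castSucc c
          = f (2 * i.val + c.val + 1) := by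
      intro i c
      have hi := i.isLt
      have hv : (((⟨p + 1, by omega⟩ : Fin (p + 3)).succAbove i.castSucc : Fin (p + 3)) : ℕ)
          = i.val := by
        rw [succAbove_val]
        simp only [Fin.coe_castSucc]
        rw [if_pos (by omega)]
      simp only [Matrix.submatrix_apply, id_eq]
      rw [hN, hv, if_pos (by omega)]
    have hB2 : ∀ c : Fin (p + 2),
        (N.submatrix (⟨p + 1, by omega⟩ : Fin (p + 3)).succAbove id) (Fin.last (p + 1)) c
          = (-1 : ℝ) ^ ((c : ℕ) + 1) := by
      intro c
      have hv : (((⟨p + 1, by omega⟩ : Fin (p + 3)).succAbove (Fin.last (p + 1)) : Fin (p + 3)) : ℕ)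
          = p + 2 := by
        rw [succAbove_val]
        simp only [Fin.val_last]
        rw [if_neg (by omega)]
      simp only [Matrix.submatrix_apply, id_eq]
      rw [hN, hv, if_neg (by omega)]
    have hle := lemmaD (p + 1) 1 (fun i c => f (2 * i.val + c.val + 1)) _ hB1 hB2
    simp only [hDdef]
    rw [hle]
    have hmat : (Matrix.of fun i j : Fin (p + 1) =>
        (fun i c => f (2 * i.val + c.val + 1)) i j.castSucc
          + (fun (i : Fin (p + 1)) (c : Fin (p + 2)) => f (2 * i.val + c.val + 1)) i j.succ).det
        = G1 := by
      rw [hG1]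
      congr 1
      ext i j
      simp only [Matrix.of_apply, Fin.coe_castSucc, Fin.val_succ]
      rw [hg]
      have e : 2 * i.val + (j.val + 1) + 1 = 2 * i.val + j.val + 1 + 1 := by omega
      rw [e]
    rw [hmat, pow_succ, pow_succ, hqdef]
    ring
  have hD0 : D (0 : Fin (p + 3)) = q * G3 := by
    have hB1 : ∀ (i : Fin (p + 1)) (c : Fin (p + 2)),
        (N.submatrix (0 : Fin (p + 3)).succAbove id) i.castSucc c
          = f (2 * i.val + c.val + 3) := by
      intro i c
      have hi := i.isLt
      have hv : (((0 : Fin (p + 3)).succAbove i.castSucc : Fin (p + 3)) : ℕ) = i.val + 1 := by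
        rw [succAbove_val]
        simp only [Fin.coe_castSucc, Fin.val_zero]
        exact if_neg (Nat.not_lt_zero _)
      simp only [Matrix.submatrix_apply, id_eq]
      rw [hN, hv, if_pos (by omega)]
      have e : 2 * (i.val + 1) + c.val + 1 = 2 * i.val + c.val + 3 := by omega
      rw [e]
    have hB2 : ∀ c : Fin (p + 2),
        (N.submatrix (0 : Fin (p + 3)).succAbove id) (Fin.last (p + 1)) c
          = (-1 : ℝ) ^ ((c : ℕ) + 1) := by
      intro c
      have hv : (((0 : Fin (p + 3)).succAbove (Fin.last (p + 1)) : Fin (p + 3)) : ℕ) = p + 2 := by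
        rw [succAbove_val]
        simp only [Fin.val_last, Fin.val_zero]
        exact if_neg (Nat.not_lt_zero _)
      simp only [Matrix.submatrix_apply, id_eq]
      rw [hN, hv, if_neg (by omega)]
    have hle := lemmaD (p + 1) 1 (fun i c => f (2 * i.val + c.val + 3)) _ hB1 hB2
    simp only [hDdef]
    rw [hle]
    have hmat : (Matrix.of fun i j : Fin (p + 1) =>
        (fun i c => f (2 * i.val + c.val + 3)) i j.castSucc
          + (fun (i : Fin (p + 1)) (c : Fin (p + 2)) => f (2 * i.val + c.val + 3)) i j.succ).det
        = G3 := by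
      rw [hG3]
      congr 1
      ext i j
      simp only [Matrix.of_apply, Fin.coe_castSucc, Fin.val_succ]
      rw [hg]
      have e : 2 * i.val + (j.val + 1) + 3 = 2 * i.val + j.val + 3 + 1 := by omega
      rw [e]
    rw [hmat, pow_succ, pow_succ, hqdef]
    ring
  -- the auxiliary row-bordered functional L
  set Q0 : Matrix (Fin (p + 1)) (Fin (p + 1)) ℝ :=
    Matrix.of fun t j =>
      if ht : (t : ℕ) < p then N ⟨(t : ℕ) + 1, by omega⟩ j.succ else 0 with hQ0def
  set L : (Fin (p + 2) → ℝ) → ℝ :=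
    fun v => (Q0.updateRow (Fin.last p) (fun j => v j.succ)).det with hLdef
  have hQ0 : ∀ (t : Fin (p + 1)) (j : Fin (p + 1)) (ht : (t : ℕ) < p),
      Q0 t j = N ⟨(t : ℕ) + 1, by omega⟩ j.succ := by
    intro t j ht
    show (if ht : (t : ℕ) < p then N ⟨(t : ℕ) + 1, by omega⟩ j.succ else 0) = _
    rw [dif_pos ht]
  have hQrow : ∀ (x : Fin (p + 3)) (t : Fin (p + 1)) (j : Fin (p + 1)),
      (t : ℕ) < p → (t : ℕ) + 1 = (x : ℕ) →
      Q0 t j = N x j.succ := by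
    intro x t j ht hx
    rw [hQ0 t j ht]
    congr 1
    exact Fin.ext (by simpa using hx)
  have hLmid : ∀ x : Fin (p + 3),
      (x : ℕ) ≠ 0 → (x : ℕ) ≠ p + 1 → (x : ℕ) ≠ p + 2 → L (fun c => N x c) = 0 := by
    intro x h1 h2 h3
    have hxlt := x.isLt
    have t0 : Fin (p + 1) := ⟨(x : ℕ) - 1, by omega⟩
    apply Matrix.det_zero_of_row_eq (i := (⟨(x : ℕ) - 1, by omega⟩ : Fin (p + 1)))
      (j := Fin.last p)
    · rw [ne_eq, Fin.ext_iff]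
      simp only [Fin.val_last]
      omega
    · funext j
      rw [Matrix.updateRow_ne (by rw [ne_eq, Fin.ext_iff]; simp only [Fin.val_last]; omega),
        Matrix.updateRow_self]
      exact hQrow x ⟨(x : ℕ) - 1, by omega⟩ j (by exact (by omega : (x : ℕ) - 1 < p))
        (by exact (by omega : (x : ℕ) - 1 + 1 = (x : ℕ)))
  have hL1 : L (fun c => N (⟨p + 1, by omega⟩ : Fin (p + 3)) c) = F4 := by
    simp only [hLdef]
    rw [hF4]
    congr 1
    funext t j
    by_cases ht : t = Fin.last p
    · subst ht
      rw [Matrix.updateRow_self, hN, if_pos (Nat.lt_succ_self (p + 1)), Matrix.of_apply]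
      simp only [Fin.val_succ, Fin.val_last]
      have e : 2 * (p + 1) + (j.val + 1) + 1 = 2 * p + j.val + 4 := by omega
      rw [e]
    · have htv : (t : ℕ) < p := by
        have := t.isLt
        have : (t : ℕ) ≠ p := fun hh => ht (Fin.ext (by simp [hh]))
        omega
      rw [Matrix.updateRow_ne ht, hQ0 t j htv, hN, if_pos (Nat.succ_lt_succ t.isLt),
        Matrix.of_apply]
      simp only [Fin.val_succ]
      have e : 2 * ((t : ℕ) + 1) + (j.val + 1) + 1 = 2 * (t : ℕ) + j.val + 4 := by omega
      rw [e]
  have hL0 : L (fun c => N (0 : Fin (p + 3)) c) = q * F2 := by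
    have hM : (Q0.updateRow (Fin.last p) (fun j => N (0 : Fin (p + 3)) j.succ))
        = (Matrix.of fun i j : Fin (p + 1) => f (2 * i.val + j.val + 2)).submatrix
            (finRotate (p + 1)) id := by
      funext t j
      simp only [Matrix.submatrix_apply, id_eq]
      by_cases ht : t = Fin.last p
      · subst ht
        rw [Matrix.updateRow_self, hN, if_pos (by simp), finRotate_last, Matrix.of_apply]
        simp only [Fin.val_succ, Fin.val_zero]
        have e : 2 * 0 + (j.val + 1) + 1 = 2 * 0 + j.val + 2 := by omega
        rw [e]
      · have htv : (t : ℕ) < p := by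
          have := t.isLt
          have : (t : ℕ) ≠ p := fun hh => ht (Fin.ext (by simp [hh]))
          omega
        rw [Matrix.updateRow_ne ht, hQ0 t j htv, hN, if_pos (Nat.succ_lt_succ t.isLt),
          finRotate_succ_apply, Matrix.of_apply]
        have hval : ((t + 1 : Fin (p + 1)) : ℕ) = (t : ℕ) + 1 := by
          rw [Fin.val_add_one, if_neg ht]
        rw [hval]
        simp only [Fin.val_succ]
        have e : 2 * ((t : ℕ) + 1) + (j.val + 1) + 1 = 2 * ((t : ℕ) + 1) + j.val + 2 := by omega
        rw [e]
    simp only [hLdef]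
    show (Q0.updateRow (Fin.last p) (fun j => N (0 : Fin (p + 3)) j.succ)).det = q * F2
    rw [hM, Matrix.det_permute (finRotate (p + 1)), sign_finRotate, hF2]
    rw [hqdef]
    push_cast
    ring
  have hLlast : L (fun c => N (Fin.last (p + 2)) c) = q * G4 := by
    have hB1 : ∀ (i : Fin p) (c : Fin (p + 1)),
        (Q0.updateRow (Fin.last p) (fun j => N (Fin.last (p + 2)) j.succ)) i.castSucc c
          = f (2 * i.val + c.val + 4) := by
      intro i c
      have hi := i.isLt
      rw [Matrix.updateRow_ne (by rw [ne_eq, Fin.ext_iff]; simp only [Fin.coe_castSucc, Fin.val_last]; omega),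
        hQ0 i.castSucc c (by simpa using hi), hN, if_pos (Nat.succ_lt_succ i.castSucc.isLt)]
      simp only [Fin.coe_castSucc, Fin.val_succ]
      have e : 2 * ((i : ℕ) + 1) + (c.val + 1) + 1 = 2 * (i : ℕ) + c.val + 4 := by omega
      rw [e]
    have hB2 : ∀ c : Fin (p + 1),
        (Q0.updateRow (Fin.last p) (fun j => N (Fin.last (p + 2)) j.succ)) (Fin.last p) c
          = (-1 : ℝ) ^ ((c : ℕ) + 0) := by
      intro c
      rw [Matrix.updateRow_self, hN, if_neg (by simp)]
      simp only [Fin.val_succ]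
      rw [show (c : ℕ) + 1 + 1 = ((c : ℕ) + 0) + 2 by omega, pow_add]
      norm_num
    have hle := lemmaD p 0 (fun i c => f (2 * i.val + c.val + 4)) _ hB1 hB2
    simp only [hLdef]
    show (Q0.updateRow (Fin.last p) (fun j => N (Fin.last (p + 2)) j.succ)).det = q * G4
    rw [hle, add_zero, ← hqdef, hG4]
    congr 1
    congr 1
    ext i j
    simp only [Matrix.of_apply, Fin.coe_castSucc, Fin.val_succ]
    rw [hg]
    have e : 2 * i.val + (j.val + 1) + 4 = 2 * i.val + j.val + 4 + 1 := by omega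
    rw [e]
  -- summing the vector identity against L
  have hsum : ∑ x : Fin (p + 3), (-1 : ℝ) ^ (x : ℕ) * D x * L (fun c => N x c) = 0 := by
    have h1 := det_updateRow_sum' Q0 (Fin.last p) (Finset.univ : Finset (Fin (p + 3)))
      (fun x => (-1 : ℝ) ^ (x : ℕ) * D x) (fun x => fun j => N x j.succ)
    have h2 : (fun j : Fin (p + 1) =>
        ∑ x : Fin (p + 3), ((-1 : ℝ) ^ (x : ℕ) * D x) * N x j.succ) = (fun _ => 0) :=
      funext fun j => key j.succ
    rw [h2] at h1
    have h3 : (Q0.updateRow (Fin.last p) (fun _ => (0 : ℝ))).det = 0 :=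
      Matrix.det_eq_zero_of_row_eq_zero (Fin.last p) (fun j => by rw [Matrix.updateRow_self])
    rw [h3] at h1
    exact h1.symm
  have hsplit : ∑ x ∈ ({(0 : Fin (p + 3)), ⟨p + 1, by omega⟩, Fin.last (p + 2)} :
        Finset (Fin (p + 3))), (-1 : ℝ) ^ (x : ℕ) * D x * L (fun c => N x c) = 0 := by
    rw [Finset.sum_subset (Finset.subset_univ _) ?_]
    · exact hsum
    · intro x _ hx
      simp only [Finset.mem_insert, Finset.mem_singleton] at hx
      push_neg at hx
      obtain ⟨e1, e2, e3⟩ := hx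
      rw [hLmid x (fun hv => e1 (Fin.ext (by simpa using hv)))
        (fun hv => e2 (Fin.ext (by simpa using hv)))
        (fun hv => e3 (Fin.ext (by simpa using hv))), mul_zero]
  have hnm1 : (0 : Fin (p + 3)) ∉ ({⟨p + 1, by omega⟩, Fin.last (p + 2)} :
      Finset (Fin (p + 3))) := by
    simp only [Finset.mem_insert, Finset.mem_singleton, not_or]
    constructor
    · intro hh
      have := congrArg Fin.val hh
      simp only [Fin.val_zero] at this
      omega
    · intro hh
      have := congrArg Fin.val hh
      simp only [Fin.val_zero, Fin.val_last] at this
      omega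
  have hnm2 : (⟨p + 1, by omega⟩ : Fin (p + 3)) ∉ ({Fin.last (p + 2)} :
      Finset (Fin (p + 3))) := by
    simp only [Finset.mem_singleton]
    intro hh
    have := congrArg Fin.val hh
    simp only [Fin.val_last] at this
    omega
  rw [Finset.sum_insert hnm1, Finset.sum_insert hnm2, Finset.sum_singleton] at hsplit
  rw [hD0, hD1, hDlast, hL0, hL1, hLlast] at hsplit
  simp only [Fin.val_zero, pow_zero, Fin.val_last] at hsplit
  rw [epow1, epow2] at hsplit
  linear_combination (-1 : ℝ) * hsplit + (-(G1 * F4 - F1 * G4 - G3 * F2)) * hq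


theorem stmt5 (S : ℕ → ℝ) (m : ℕ) (hm : 1 ≤ m) (n : ℕ) :
    Psi m (Δ S) (n + 1) * Psi m (Δ^[4] S) n
      - Psi (m + 1) (Δ S) n * Psi (m - 1) (Δ^[4] S) (n + 1)
      = Psi m (Δ^[3] S) (n + 1) * Psi m (Δ^[2] S) n := by
  obtain ⟨p, rfl⟩ : ∃ p, m = p + 1 := ⟨m - 1, by omega⟩
  have hconv : ∀ (k s x : ℕ), Psi k (Δ^[s] S) x
      = (Matrix.of fun i j : Fin k => (Δ^[2 * i.val + j.val + s] S) x).det := by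
    intro k s x
    rw [psi_eq]
    congr 1
    ext i j
    show (Δ^[2 * i.val + j.val] (Δ^[s] S)) x = (Δ^[2 * i.val + j.val + s] S) x
    simp only [Function.iterate_add_apply]
  have hds : Δ S = Δ^[1] S := rfl
  rw [hds, show p + 1 + 1 = p + 2 from rfl, show p + 1 - 1 = p from rfl,
    hconv (p + 1) 1 (n + 1), hconv (p + 1) 4 n, hconv (p + 2) 1 n, hconv p 4 (n + 1),
    hconv (p + 1) 3 (n + 1), hconv (p + 1) 2 n]
  exact keyB p (fun r => (Δ^[r] S) n) (fun r => (Δ^[r] S) (n + 1))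
    (fun r => delta_shift S r n)
end

section
/- For every integer m ≥ 1 and every n ∈ ℕ, the determinantal identity Ψ_{m−1}(Δ³S)_n · Ψ_m(Δ²S)_{n+1} − Ψ_{m−1}(Δ³S)_{n+1} · Ψ_m(Δ²S)_n = Ψ_m(Δ³S)_n · Ψ_{m−1}(Δ²S)_{n+1} holds. (This is the bilinear relation F_k^n F_{k+2}^{n+1} − F_k^{n+1} F_{k+2}^n = F_{k+3}^n F_{k−1}^{n+1} of the lattice Boussinesq molecule solution in the case k = 3m, proved in the paper as a Jacobi determinant identity.) -/
set_option linter.unusedSectionVars false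

open Matrix


open Matrix

section Gen
variable {ι : Type*} [Fintype ι] [DecidableEq ι]

lemma det_eq_zero_of_rows_mem {M : Matrix ι ι ℝ} {p : Submodule ℝ (ι → ℝ)}
    (hp : p ≠ ⊤) (h : ∀ i, M i ∈ p) : M.det = 0 := by
  by_contra hd
  have hu : IsUnit M := (Matrix.isUnit_iff_isUnit_det M).2 (isUnit_iff_ne_zero.2 hd)
  have hli : LinearIndependent ℝ (fun i => M i) :=
    Matrix.linearIndependent_rows_iff_isUnit.2 hu
  have hli' : LinearIndependent ℝ (fun i => (⟨M i, h i⟩ : p)) := by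
    apply LinearIndependent.of_comp p.subtype
    exact hli
  have h1 : Fintype.card ι ≤ Module.finrank ℝ p := hli'.fintype_card_le_finrank
  have h2 : Module.finrank ℝ p < Module.finrank ℝ (ι → ℝ) :=
    Submodule.finrank_lt hp
  rw [Module.finrank_fintype_fun_eq_card] at h2
  omega

noncomputable def Dg (A : Matrix ι ι ℝ) (i₁ i₂ : ι) (a b : ι → ℝ) : ℝ :=
  (Matrix.updateRow (Matrix.updateRow A i₁ a) i₂ b).det

variable (A : Matrix ι ι ℝ) (i₁ i₂ : ι)

lemma updateRow_comm'_s6 (h : i₁ ≠ i₂) (a b : ι → ℝ) :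
    Matrix.updateRow (Matrix.updateRow A i₁ a) i₂ b
      = Matrix.updateRow (Matrix.updateRow A i₂ b) i₁ a := by
  ext i j
  by_cases h1 : i = i₁ <;> by_cases h2 : i = i₂ <;>
    simp [Matrix.updateRow_apply, h1, h2, h, Ne.symm h]

lemma Dg_add_right (a b c : ι → ℝ) :
    Dg A i₁ i₂ a (b + c) = Dg A i₁ i₂ a b + Dg A i₁ i₂ a c :=
  Matrix.det_updateRow_add _ _ _ _

lemma Dg_smul_right (a : ι → ℝ) (s : ℝ) (b : ι → ℝ) :
    Dg A i₁ i₂ a (s • b) = s * Dg A i₁ i₂ a b :=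
  Matrix.det_updateRow_smul _ _ _ _

lemma Dg_add_left (h : i₁ ≠ i₂) (a b c : ι → ℝ) :
    Dg A i₁ i₂ (a + b) c = Dg A i₁ i₂ a c + Dg A i₁ i₂ b c := by
  unfold Dg
  rw [updateRow_comm'_s6 A i₁ i₂ h, updateRow_comm'_s6 A i₁ i₂ h a,
    updateRow_comm'_s6 A i₁ i₂ h b]
  exact Matrix.det_updateRow_add _ _ _ _

lemma Dg_smul_left (h : i₁ ≠ i₂) (s : ℝ) (a b : ι → ℝ) :
    Dg A i₁ i₂ (s • a) b = s * Dg A i₁ i₂ a b := by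
  unfold Dg
  rw [updateRow_comm'_s6 A i₁ i₂ h, updateRow_comm'_s6 A i₁ i₂ h a]
  exact Matrix.det_updateRow_smul _ _ _ _

lemma Dg_same (h : i₁ ≠ i₂) (a : ι → ℝ) : Dg A i₁ i₂ a a = 0 := by
  apply Matrix.det_zero_of_row_eq h
  simp [Matrix.updateRow_apply, h]

lemma Dg_swap (h : i₁ ≠ i₂) (a b : ι → ℝ) : Dg A i₁ i₂ a b = - Dg A i₁ i₂ b a := by
  have h0 : Dg A i₁ i₂ (a + b) (a + b) = 0 := Dg_same A i₁ i₂ h _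
  rw [Dg_add_right, Dg_add_left A i₁ i₂ h, Dg_add_left A i₁ i₂ h,
    Dg_same A i₁ i₂ h, Dg_same A i₁ i₂ h] at h0
  linarith

lemma Dg_row (h : i₁ ≠ i₂) {i : ι} (h1 : i ≠ i₁) (h2 : i ≠ i₂) (b : ι → ℝ) :
    Dg A i₁ i₂ (A i) b = 0 := by
  apply Matrix.det_zero_of_row_eq h1.symm
  simp [Matrix.updateRow_apply, h1, h2, h]

lemma Dg_zero_left (h : i₁ ≠ i₂) (b : ι → ℝ) : Dg A i₁ i₂ 0 b = 0 := by
  have := Dg_smul_left A i₁ i₂ h 0 0 b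
  simpa using this

lemma pluecker_s6 (h : i₁ ≠ i₂) (w x y z : ι → ℝ) :
    Dg A i₁ i₂ y z * Dg A i₁ i₂ w x - Dg A i₁ i₂ x z * Dg A i₁ i₂ w y
      + Dg A i₁ i₂ x y * Dg A i₁ i₂ w z = 0 := by
  classical
  set s : Set (ι → ℝ) :=
    (Set.range fun i : {i : ι // i ≠ i₁ ∧ i ≠ i₂} => A i.1) ∪ {x, y, z} with hs_def
  by_cases hs : Submodule.span ℝ s = ⊤
  · have key : ∀ u ∈ Submodule.span ℝ s,
        Dg A i₁ i₂ y z * Dg A i₁ i₂ u x - Dg A i₁ i₂ x z * Dg A i₁ i₂ u y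
          + Dg A i₁ i₂ x y * Dg A i₁ i₂ u z = 0 := by
      intro u hu
      induction hu using Submodule.span_induction with
      | mem u hu =>
        rcases hu with ⟨⟨i, hi1, hi2⟩, rfl⟩ | hu
        · rw [Dg_row A i₁ i₂ h hi1 hi2, Dg_row A i₁ i₂ h hi1 hi2,
            Dg_row A i₁ i₂ h hi1 hi2]; ring
        · rcases hu with rfl | rfl | rfl
          · rw [Dg_same A i₁ i₂ h]; ring
          · rw [Dg_same A i₁ i₂ h, Dg_swap A i₁ i₂ h u x]; ring
          · rw [Dg_same A i₁ i₂ h, Dg_swap A i₁ i₂ h u x, Dg_swap A i₁ i₂ h u y]; ring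
      | zero =>
        rw [Dg_zero_left A i₁ i₂ h, Dg_zero_left A i₁ i₂ h, Dg_zero_left A i₁ i₂ h]; ring
      | add u v hu' hv' hu hv =>
        rw [Dg_add_left A i₁ i₂ h, Dg_add_left A i₁ i₂ h, Dg_add_left A i₁ i₂ h]
        linear_combination hu + hv
      | smul c u hu' hu =>
        rw [Dg_smul_left A i₁ i₂ h, Dg_smul_left A i₁ i₂ h, Dg_smul_left A i₁ i₂ h]
        linear_combination c * hu
    exact key w (hs ▸ Submodule.mem_top)
  · have hz : ∀ a b : ι → ℝ, a ∈ s → b ∈ s → Dg A i₁ i₂ a b = 0 := by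
      intro a b ha hb
      apply det_eq_zero_of_rows_mem hs
      intro i
      by_cases h2 : i = i₂
      · subst h2; rw [Matrix.updateRow_self]; exact Submodule.subset_span hb
      · rw [Matrix.updateRow_ne h2]
        by_cases h1 : i = i₁
        · subst h1; rw [Matrix.updateRow_self]; exact Submodule.subset_span ha
        · rw [Matrix.updateRow_ne h1]
          exact Submodule.subset_span (Or.inl ⟨⟨i, h1, h2⟩, rfl⟩)
    have hx : x ∈ s := Or.inr (by simp)
    have hy : y ∈ s := Or.inr (by simp)
    have hzz : z ∈ s := Or.inr (by simp)
    rw [hz y z hy hzz, hz x z hx hzz, hz x y hx hy]; ring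

end Gen

open Matrix

lemma det_unitRow_last {q : ℕ} (A : Matrix (Fin (q+1)) (Fin (q+1)) ℝ) (c : Fin (q+1))
    (h : A (Fin.last q) = Pi.single c 1) :
    A.det = (-1)^(q + c.val) * (A.submatrix Fin.castSucc c.succAbove).det := by
  rw [Matrix.det_succ_row A (Fin.last q)]
  rw [Finset.sum_eq_single c]
  · rw [h, Pi.single_eq_same, Fin.succAbove_last]
    simp [Fin.val_last]
  · intro b _ hb
    rw [h, Pi.single_eq_of_ne hb]
    ring
  · intro hc; exact absurd (Finset.mem_univ c) hc

lemma det_colDiff {q : ℕ} (A : Matrix (Fin (q+1)) (Fin (q+1)) ℝ) :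
    A.det = (Matrix.of fun i j =>
      Fin.cases (A i 0) (fun j' : Fin q => A i j'.succ - A i j'.castSucc) j).det := by
  set V : Matrix (Fin (q+1)) (Fin (q+1)) ℝ :=
    Matrix.of fun j' j => if (j' : ℕ) + 1 = (j : ℕ) then (1:ℝ) else 0 with hV
  set U : Matrix (Fin (q+1)) (Fin (q+1)) ℝ := 1 - V with hU
  have hAV : ∀ i j, (A * V) i j = Fin.cases 0 (fun j' : Fin q => A i j'.castSucc) j := by
    intro i j
    rw [Matrix.mul_apply]
    induction j using Fin.cases with
    | zero =>
      simp only [Fin.cases_zero]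
      apply Finset.sum_eq_zero
      intro j' _
      simp [hV]
    | succ j' =>
      simp only [Fin.cases_succ]
      rw [Finset.sum_eq_single j'.castSucc]
      · simp [hV]
      · intro b _ hb
        have : ¬ ((b : ℕ) + 1 = (j'.succ : ℕ)) := by
          simp only [Fin.val_succ]
          intro hcon
          apply hb
          apply Fin.ext
          simp [Fin.coe_castSucc]
          omega
        simp only [hV, Matrix.of_apply, this, if_false]
        ring
      · intro hc; exact absurd (Finset.mem_univ _) hc
  have hAU : A * U = Matrix.of fun i j =>
      Fin.cases (A i 0) (fun j' : Fin q => A i j'.succ - A i j'.castSucc) j := by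
    ext i j
    rw [hU, Matrix.mul_sub, Matrix.mul_one, Matrix.sub_apply, hAV]
    induction j using Fin.cases with
    | zero => simp
    | succ j' => simp
  have hdetU : U.det = 1 := by
    have ht : U.BlockTriangular id := by
      intro i j hij
      simp only [hU, Matrix.sub_apply, Matrix.one_apply, hV, Matrix.of_apply]
      have h1 : i ≠ j := ne_of_gt hij
      have h2 : ¬ ((i : ℕ) + 1 = (j : ℕ)) := by
        have : (j : ℕ) < (i : ℕ) := hij
        omega
      simp [h1, h2]
    rw [Matrix.det_of_upperTriangular ht]
    apply Finset.prod_eq_one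
    intro i _
    simp [hU, Matrix.one_apply, hV]
  calc A.det = A.det * U.det := by rw [hdetU, mul_one]
    _ = (A * U).det := (Matrix.det_mul A U).symm
    _ = _ := by rw [hAU]


lemma hdelta (k : ℕ) (w : ℕ → ℝ) (p : ℕ) :
    Δ^[k] w (p + 1) - Δ^[k] w p = Δ^[k] (Δ w) p := by
  have h : Δ^[k] (Δ w) p = Δ (Δ^[k] w) p := by
    rw [← Function.iterate_succ_apply, Function.iterate_succ_apply']
  rw [h]
  rfl

lemma key (μ n : ℕ) (v : ℕ → ℝ) :
    Psi μ (Δ v) n * Psi (μ+1) v (n+1) - Psi μ (Δ v) (n+1) * Psi (μ+1) v n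
      = Psi (μ+1) (Δ v) n * Psi μ v (n+1) := by
  classical
  set B : Matrix (Fin (μ+2)) (Fin (μ+2)) ℝ :=
    Matrix.of (fun i j : Fin (μ+2) => Δ^[2 * i.val] v (n + j.val)) with hB
  set i₁ : Fin (μ+2) := ⟨μ, by omega⟩ with hi₁
  set i₂ : Fin (μ+2) := Fin.last (μ+1) with hi₂
  have h12 : i₁ ≠ i₂ := by
    simp [hi₁, hi₂, Fin.ext_iff, Fin.val_last]
  set e0 : Fin (μ+2) → ℝ := Pi.single 0 1 with he0
  set em : Fin (μ+2) → ℝ := Pi.single (Fin.last (μ+1)) 1 with hem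
  set ones : Fin (μ+2) → ℝ := fun _ => 1 with hones
  set l : Fin (μ+2) → ℝ := fun j => Δ^[2 * μ] v (n + j.val) with hl
  have hrow : Matrix.updateRow B i₁ l = B := by
    have h : l = B i₁ := by funext j; simp [hB, hl, hi₁]
    rw [h, Matrix.updateRow_eq_self]
  -- E4
  have E4 : Dg B i₁ i₂ l em = Psi (μ+1) v n := by
    unfold Dg
    rw [hrow]
    set M := Matrix.updateRow B i₂ em with hM
    have hMl : M (Fin.last (μ+1)) = Pi.single (Fin.last (μ+1)) 1 := by
      rw [hM, hi₂, Matrix.updateRow_self, hem]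
    rw [det_unitRow_last M (Fin.last (μ+1)) hMl, Fin.succAbove_last]
    have hsub : M.submatrix Fin.castSucc Fin.castSucc
        = Matrix.of (fun i j : Fin (μ+1) => Δ^[2 * i.val] v (n + j.val)) := by
      ext i j
      rw [Matrix.submatrix_apply, hM, Matrix.updateRow_ne (Fin.castSucc_lt_last i).ne]
      simp [hB]
    rw [hsub]
    have hsgn : (-1:ℝ)^((μ+1) + (Fin.last (μ+1)).val) = 1 := by
      rw [Fin.val_last]; exact Even.neg_one_pow ⟨μ+1, by ring⟩
    rw [hsgn, one_mul]
    rfl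
  -- E2
  have E2 : Dg B i₁ i₂ l e0 = (-1:ℝ)^(μ+1) * Psi (μ+1) v (n+1) := by
    unfold Dg
    rw [hrow]
    set M := Matrix.updateRow B i₂ e0 with hM
    have hMl : M (Fin.last (μ+1)) = Pi.single (0 : Fin (μ+2)) 1 := by
      rw [hM, hi₂, Matrix.updateRow_self, he0]
    rw [det_unitRow_last M 0 hMl]
    have hsub : M.submatrix Fin.castSucc (0 : Fin (μ+2)).succAbove
        = Matrix.of (fun i j : Fin (μ+1) => Δ^[2 * i.val] v ((n+1) + j.val)) := by
      ext i j
      rw [Matrix.submatrix_apply, Fin.zero_succAbove, hM,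
        Matrix.updateRow_ne (Fin.castSucc_lt_last i).ne]
      simp only [hB, Matrix.of_apply, Fin.coe_castSucc, Fin.val_succ]
      rw [show n + (j.val + 1) = (n+1) + j.val by omega]
    rw [hsub]
    simp only [Fin.val_zero, Nat.add_zero]
    rfl
  -- E5
  have E5 : Dg B i₁ i₂ l ones = (-1:ℝ)^(μ+1) * Psi (μ+1) (Δ v) n := by
    unfold Dg
    rw [hrow]
    set M := Matrix.updateRow B i₂ ones with hM
    rw [det_colDiff M]
    set M' : Matrix (Fin (μ+2)) (Fin (μ+2)) ℝ := Matrix.of fun i j =>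
      Fin.cases (M i 0) (fun j' : Fin (μ+1) => M i j'.succ - M i j'.castSucc) j with hM'
    have hMl : M' (Fin.last (μ+1)) = Pi.single (0 : Fin (μ+2)) 1 := by
      funext j
      induction j using Fin.cases with
      | zero => simp [hM', hM, hi₂, Matrix.updateRow_self, hones]
      | succ j' =>
        simp [hM', hM, hi₂, Matrix.updateRow_self, hones, Fin.succ_ne_zero,
          (Fin.succ_ne_zero j').symm]
    rw [det_unitRow_last M' 0 hMl]
    have hsub : M'.submatrix Fin.castSucc (0 : Fin (μ+2)).succAbove
        = Matrix.of (fun i j : Fin (μ+1) => Δ^[2 * i.val] (Δ v) (n + j.val)) := by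
      ext i j
      rw [Matrix.submatrix_apply, Fin.zero_succAbove]
      simp only [hM', Matrix.of_apply, Fin.cases_succ]
      rw [hM, Matrix.updateRow_ne (Fin.castSucc_lt_last i).ne]
      simp only [hB, Matrix.of_apply, Fin.coe_castSucc, Fin.val_succ]
      rw [show n + (j.val + 1) = (n + j.val) + 1 by omega, hdelta]
    rw [hsub]
    simp only [Fin.val_zero, Nat.add_zero]
    rfl
  -- E6
  have E6 : Dg B i₁ i₂ e0 em = (-1:ℝ)^μ * Psi μ v (n+1) := by
    unfold Dg
    set M := Matrix.updateRow (Matrix.updateRow B i₁ e0) i₂ em with hM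
    have hMl : M (Fin.last (μ+1)) = Pi.single (Fin.last (μ+1)) 1 := by
      rw [hM, hi₂, Matrix.updateRow_self, hem]
    rw [det_unitRow_last M (Fin.last (μ+1)) hMl, Fin.succAbove_last]
    set Sm := M.submatrix Fin.castSucc Fin.castSucc with hSm
    have hSl : Sm (Fin.last μ) = Pi.single (0 : Fin (μ+1)) 1 := by
      funext j
      have hcs : (Fin.last μ).castSucc = i₁ := by
        apply Fin.ext; simp [hi₁]
      rw [hSm, Matrix.submatrix_apply, hcs, hM, Matrix.updateRow_ne h12,
        Matrix.updateRow_self, he0]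
      simp only [Pi.single_apply, Fin.castSucc_eq_zero_iff]
    rw [det_unitRow_last Sm 0 hSl]
    have hsub : Sm.submatrix Fin.castSucc (0 : Fin (μ+1)).succAbove
        = Matrix.of (fun i j : Fin μ => Δ^[2 * i.val] v ((n+1) + j.val)) := by
      ext i j
      have hne1 : (i.castSucc.castSucc : Fin (μ+2)) ≠ i₁ := by
        have hlt := i.isLt
        simp only [ne_eq, hi₁, Fin.ext_iff, Fin.coe_castSucc]
        omega
      rw [Matrix.submatrix_apply, hSm, Matrix.submatrix_apply, Fin.zero_succAbove, hM,
        Matrix.updateRow_ne (Fin.castSucc_lt_last _).ne, Matrix.updateRow_ne hne1]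
      simp only [hB, Matrix.of_apply, Fin.coe_castSucc, Fin.val_succ]
      rw [show n + (j.val + 1) = (n+1) + j.val by omega]
    rw [hsub]
    have hsgn : (-1:ℝ)^((μ+1) + (Fin.last (μ+1)).val) = 1 := by
      rw [Fin.val_last]; exact Even.neg_one_pow ⟨μ+1, by ring⟩
    rw [hsgn, one_mul]
    simp only [Fin.val_zero, Nat.add_zero]
    rfl
  -- E1
  have E1 : Dg B i₁ i₂ ones em = (-1:ℝ)^μ * Psi μ (Δ v) n := by
    unfold Dg
    set M := Matrix.updateRow (Matrix.updateRow B i₁ ones) i₂ em with hM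
    have hMl : M (Fin.last (μ+1)) = Pi.single (Fin.last (μ+1)) 1 := by
      rw [hM, hi₂, Matrix.updateRow_self, hem]
    rw [det_unitRow_last M (Fin.last (μ+1)) hMl, Fin.succAbove_last]
    set Sm := M.submatrix Fin.castSucc Fin.castSucc with hSm
    rw [det_colDiff Sm]
    set S' : Matrix (Fin (μ+1)) (Fin (μ+1)) ℝ := Matrix.of fun i j =>
      Fin.cases (Sm i 0) (fun j' : Fin μ => Sm i j'.succ - Sm i j'.castSucc) j with hS'
    have hcs : (Fin.last μ).castSucc = i₁ := by
      apply Fin.ext; simp [hi₁]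
    have hSrow : ∀ jj : Fin (μ+1), Sm (Fin.last μ) jj = 1 := by
      intro jj
      rw [hSm, Matrix.submatrix_apply, hcs, hM, Matrix.updateRow_ne h12,
        Matrix.updateRow_self, hones]
    have hSl : S' (Fin.last μ) = Pi.single (0 : Fin (μ+1)) 1 := by
      funext j
      induction j using Fin.cases with
      | zero => simp [hS', hSrow]
      | succ j' => simp [hS', hSrow, (Fin.succ_ne_zero j').symm, Fin.succ_ne_zero]
    rw [det_unitRow_last S' 0 hSl]
    have hsub : S'.submatrix Fin.castSucc (0 : Fin (μ+1)).succAbove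
        = Matrix.of (fun i j : Fin μ => Δ^[2 * i.val] (Δ v) (n + j.val)) := by
      ext i j
      have hne1 : (i.castSucc.castSucc : Fin (μ+2)) ≠ i₁ := by
        have hlt := i.isLt
        simp only [ne_eq, hi₁, Fin.ext_iff, Fin.coe_castSucc]
        omega
      rw [Matrix.submatrix_apply, Fin.zero_succAbove]
      simp only [hS', Matrix.of_apply, Fin.cases_succ]
      rw [hSm, Matrix.submatrix_apply, Matrix.submatrix_apply, hM,
        Matrix.updateRow_ne (Fin.castSucc_lt_last _).ne, Matrix.updateRow_ne hne1]
      simp only [hB, Matrix.of_apply, Fin.coe_castSucc, Fin.val_succ]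
      rw [show n + (j.val + 1) = (n + j.val) + 1 by omega, hdelta]
    rw [hsub]
    have hsgn : (-1:ℝ)^((μ+1) + (Fin.last (μ+1)).val) = 1 := by
      rw [Fin.val_last]; exact Even.neg_one_pow ⟨μ+1, by ring⟩
    rw [hsgn, one_mul]
    simp only [Fin.val_zero, Nat.add_zero]
    rfl
  -- E3
  have E3 : Dg B i₁ i₂ ones e0 = (-1:ℝ)^(μ+1) * ((-1:ℝ)^μ * Psi μ (Δ v) (n+1)) := by
    unfold Dg
    set M := Matrix.updateRow (Matrix.updateRow B i₁ ones) i₂ e0 with hM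
    have hMl : M (Fin.last (μ+1)) = Pi.single (0 : Fin (μ+2)) 1 := by
      rw [hM, hi₂, Matrix.updateRow_self, he0]
    rw [det_unitRow_last M 0 hMl]
    set Sm := M.submatrix Fin.castSucc (0 : Fin (μ+2)).succAbove with hSm
    rw [det_colDiff Sm]
    set S' : Matrix (Fin (μ+1)) (Fin (μ+1)) ℝ := Matrix.of fun i j =>
      Fin.cases (Sm i 0) (fun j' : Fin μ => Sm i j'.succ - Sm i j'.castSucc) j with hS'
    have hcs : (Fin.last μ).castSucc = i₁ := by
      apply Fin.ext; simp [hi₁]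
    have hSrow : ∀ jj : Fin (μ+1), Sm (Fin.last μ) jj = 1 := by
      intro jj
      rw [hSm, Matrix.submatrix_apply, hcs, hM, Matrix.updateRow_ne h12,
        Matrix.updateRow_self, hones]
    have hSl : S' (Fin.last μ) = Pi.single (0 : Fin (μ+1)) 1 := by
      funext j
      induction j using Fin.cases with
      | zero => simp [hS', hSrow]
      | succ j' => simp [hS', hSrow, (Fin.succ_ne_zero j').symm, Fin.succ_ne_zero]
    rw [det_unitRow_last S' 0 hSl]
    have hsub : S'.submatrix Fin.castSucc (0 : Fin (μ+1)).succAbove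
        = Matrix.of (fun i j : Fin μ => Δ^[2 * i.val] (Δ v) ((n+1) + j.val)) := by
      ext i j
      have hne1 : (i.castSucc.castSucc : Fin (μ+2)) ≠ i₁ := by
        have hlt := i.isLt
        simp only [ne_eq, hi₁, Fin.ext_iff, Fin.coe_castSucc]
        omega
      rw [Matrix.submatrix_apply, Fin.zero_succAbove]
      simp only [hS', Matrix.of_apply, Fin.cases_succ]
      rw [hSm, Matrix.submatrix_apply, Matrix.submatrix_apply, Fin.zero_succAbove,
        Fin.zero_succAbove, hM,
        Matrix.updateRow_ne (Fin.castSucc_lt_last _).ne, Matrix.updateRow_ne hne1]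
      simp only [hB, Matrix.of_apply, Fin.coe_castSucc, Fin.val_succ]
      rw [show n + (j.val + 1 + 1) = ((n+1) + j.val) + 1 by omega,
        show n + (j.val + 1) = (n+1) + j.val by omega, hdelta]
    rw [hsub]
    simp only [Fin.val_zero, Nat.add_zero]
    rfl
  -- assemble
  have hP := pluecker_s6 B i₁ i₂ h12 l ones e0 em
  rw [E6, E5, E1, E2, E3, E4] at hP
  have hc : (-1:ℝ)^μ * (-1:ℝ)^μ = 1 := by
    rw [← pow_add]; exact Even.neg_one_pow ⟨μ, rfl⟩
  rw [pow_succ] at hP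
  set T1 := Psi μ (Δ v) n
  set T2 := Psi (μ+1) v (n+1)
  set T3 := Psi μ (Δ v) (n+1)
  set T4 := Psi (μ+1) v n
  set T5 := Psi (μ+1) (Δ v) n
  set T6 := Psi μ v (n+1)
  linear_combination hP - (T1*T2 - T3*T4 - T5*T6) * hc

theorem stmt6 (S : ℕ → ℝ) (m : ℕ) (hm : 1 ≤ m) (n : ℕ) :
    Psi (m - 1) (Δ^[3] S) n * Psi m (Δ^[2] S) (n + 1)
      - Psi (m - 1) (Δ^[3] S) (n + 1) * Psi m (Δ^[2] S) n
      = Psi m (Δ^[3] S) n * Psi (m - 1) (Δ^[2] S) (n + 1) := by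
  obtain ⟨μ, rfl⟩ : ∃ μ, m = μ + 1 := ⟨m - 1, by omega⟩
  simp only [Nat.add_sub_cancel]
  have hΔ3 : Δ^[3] S = Δ (Δ^[2] S) := Function.iterate_succ_apply' Δ 2 S
  rw [hΔ3]
  exact key μ n (Δ^[2] S)
end

section
/- For every integer m ≥ 1 and every n ∈ ℕ, the determinantal identity Ψ_m(ΔS)_n · Ψ_m(Δ³S)_{n+1} − Ψ_m(ΔS)_{n+1} · Ψ_m(Δ³S)_n = Ψ_{m+1}(ΔS)_n · Ψ_{m−1}(Δ³S)_{n+1} holds. (This is the bilinear relation F_k^n F_{k+2}^{n+1} − F_k^{n+1} F_{k+2}^n = F_{k+3}^n F_{k−1}^{n+1} of the lattice Boussinesq molecule solution in the case k = 3m+1.) -/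
open Matrix

/-- The corner embedding `Fin 2 → Fin (k+2)` sending `0 ↦ 0`, `1 ↦ last`. -/
def cornerFun (k : ℕ) : Fin 2 ⊕ Fin k → Fin (k + 2) :=
  Sum.elim ![0, Fin.last (k+1)] (fun i => i.succ.castSucc)

/-- The equivalence putting `0` and `last` of `Fin (k+2)` first. -/
noncomputable def cornerEquiv (k : ℕ) : Fin 2 ⊕ Fin k ≃ Fin (k + 2) :=
  Equiv.ofBijective (cornerFun k) <| by
    rw [Fintype.bijective_iff_injective_and_card]
    refine ⟨?_, by simp [Nat.add_comm]⟩
    rintro (a | a) (b | b) h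
    · fin_cases a <;> fin_cases b <;> simp_all [cornerFun, Fin.ext_iff]
    · exfalso; fin_cases a <;>
        · simp only [cornerFun, Sum.elim_inl, Sum.elim_inr, Fin.ext_iff] at h
          simp_all [Fin.ext_iff] <;> omega
    · exfalso; fin_cases b <;>
        · simp only [cornerFun, Sum.elim_inl, Sum.elim_inr, Fin.ext_iff] at h
          simp_all [Fin.ext_iff] <;> omega
    · simp only [cornerFun, Sum.elim_inr, Fin.ext_iff] at h
      exact congrArg Sum.inr (Fin.ext (by simpa using h))

@[simp] lemma cornerEquiv_inl0 (k : ℕ) : cornerEquiv k (Sum.inl 0) = 0 := rfl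
@[simp] lemma cornerEquiv_inl1 (k : ℕ) : cornerEquiv k (Sum.inl 1) = Fin.last (k+1) := rfl
@[simp] lemma cornerEquiv_inr (k : ℕ) (i : Fin k) :
    cornerEquiv k (Sum.inr i) = i.succ.castSucc := rfl

variable {R : Type*} [CommRing R]

open Matrix in
/-- The "companion" matrix: identity except that the first and last columns
are the corresponding columns of the adjugate. -/
noncomputable def Pmat {k : ℕ} (M : Matrix (Fin (k+2)) (Fin (k+2)) R) :
    Matrix (Fin (k+2)) (Fin (k+2)) R :=
  fun i j => if j = 0 then adjugate M i 0
    else if j = Fin.last (k+1) then adjugate M i (Fin.last (k+1))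
    else if i = j then 1 else 0

lemma mid_ne_zero {k : ℕ} (i : Fin k) : i.succ.castSucc ≠ (0 : Fin (k+2)) := by
  simp [Fin.ext_iff]

lemma mid_ne_last {k : ℕ} (i : Fin k) : i.succ.castSucc ≠ Fin.last (k+1) := by
  simp [Fin.ext_iff]; omega

open Matrix in
lemma det_Pmat {k : ℕ} (M : Matrix (Fin (k+2)) (Fin (k+2)) R) :
    (Pmat M).det = adjugate M 0 0 * adjugate M (Fin.last (k+1)) (Fin.last (k+1))
      - adjugate M 0 (Fin.last (k+1)) * adjugate M (Fin.last (k+1)) 0 := by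
  have h : (Pmat M).submatrix (cornerEquiv k) (cornerEquiv k) =
      fromBlocks
        !![adjugate M 0 0, adjugate M 0 (Fin.last (k+1));
           adjugate M (Fin.last (k+1)) 0, adjugate M (Fin.last (k+1)) (Fin.last (k+1))]
        0
        (Matrix.of fun i j => Pmat M (cornerEquiv k (Sum.inr i)) (cornerEquiv k (Sum.inl j)))
        1 := by
    ext i j
    rcases i with i | i <;> rcases j with j | j
    · fin_cases i <;> fin_cases j <;>
        simp [Pmat, fromBlocks, Fin.ext_iff, -Fin.val_eq_zero_iff]
    · fin_cases i <;>
        simp [Pmat, fromBlocks, (mid_ne_zero j).symm, (mid_ne_last j).symm,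
          mid_ne_zero j, mid_ne_last j, Fin.ext_iff, -Fin.val_eq_zero_iff,
          Nat.ne_of_lt j.isLt, (Nat.ne_of_lt j.isLt).symm]
    · simp [fromBlocks]
    · simp [Pmat, fromBlocks, mid_ne_zero i, mid_ne_last i,
        mid_ne_zero j, mid_ne_last j, Fin.ext_iff, Matrix.one_apply, -Fin.val_eq_zero_iff,
        Nat.ne_of_lt j.isLt]
  rw [← det_submatrix_equiv_self (cornerEquiv k), h, det_fromBlocks_zero₁₂,
    det_one, mul_one, det_fin_two_of]

open Matrix in
lemma mul_Pmat_apply {k : ℕ} (M : Matrix (Fin (k+2)) (Fin (k+2)) R) (i j : Fin (k+2)) :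
    (M * Pmat M) i j =
      if j = 0 then M.det * (if i = 0 then 1 else 0)
      else if j = Fin.last (k+1) then M.det * (if i = Fin.last (k+1) then 1 else 0)
      else M i j := by
  rw [Matrix.mul_apply]
  by_cases h0 : j = 0
  · subst h0
    rw [if_pos rfl]
    calc ∑ t, M i t * Pmat M t 0 = ∑ t, M i t * adjugate M t 0 :=
          Finset.sum_congr rfl (by intro t _; simp [Pmat])
      _ = (M.det • (1 : Matrix (Fin (k+2)) (Fin (k+2)) R)) i 0 := by
          rw [← Matrix.mul_adjugate M, Matrix.mul_apply]
      _ = M.det * (if i = 0 then 1 else 0) := by simp [Matrix.one_apply]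
  · by_cases hl : j = Fin.last (k+1)
    · subst hl
      rw [if_neg h0, if_pos rfl]
      calc ∑ t, M i t * Pmat M t (Fin.last (k+1))
            = ∑ t, M i t * adjugate M t (Fin.last (k+1)) :=
          Finset.sum_congr rfl (by intro t _; simp [Pmat, h0])
        _ = (M.det • (1 : Matrix (Fin (k+2)) (Fin (k+2)) R)) i (Fin.last (k+1)) := by
          rw [← Matrix.mul_adjugate M, Matrix.mul_apply]
        _ = M.det * (if i = Fin.last (k+1) then 1 else 0) := by simp [Matrix.one_apply]
    · rw [if_neg h0, if_neg hl]
      calc ∑ t, M i t * Pmat M t j = ∑ t, if t = j then M i t else 0 :=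
          Finset.sum_congr rfl (by intro t _; simp [Pmat, h0, hl])
        _ = M i j := by simp

open Matrix in
lemma det_mul_Pmat {k : ℕ} (M : Matrix (Fin (k+2)) (Fin (k+2)) R) :
    (M * Pmat M).det = M.det ^ 2 *
      (M.submatrix (fun i : Fin k => i.succ.castSucc) (fun j : Fin k => j.succ.castSucc)).det := by
  have h : (M * Pmat M).submatrix (cornerEquiv k) (cornerEquiv k) =
      fromBlocks (M.det • (1 : Matrix (Fin 2) (Fin 2) R))
        (Matrix.of fun i j => (M * Pmat M) (cornerEquiv k (Sum.inl i)) (cornerEquiv k (Sum.inr j)))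
        0
        (M.submatrix (fun i : Fin k => i.succ.castSucc) (fun j : Fin k => j.succ.castSucc)) := by
    ext i j
    rcases i with i | i <;> rcases j with j | j
    · fin_cases i <;> fin_cases j <;>
        simp [mul_Pmat_apply, fromBlocks, Fin.ext_iff, Matrix.one_apply]
    · simp [fromBlocks]
    · fin_cases j <;>
        simp [mul_Pmat_apply, fromBlocks, mid_ne_zero i, mid_ne_last i, Fin.ext_iff, Nat.ne_of_lt i.isLt]
    · simp [mul_Pmat_apply, fromBlocks, mid_ne_zero i, mid_ne_last i,
        mid_ne_zero j, mid_ne_last j]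
  rw [← det_submatrix_equiv_self (cornerEquiv k), h, det_fromBlocks_zero₂₁, det_smul]
  simp [pow_two]


open Matrix in
lemma dodgson_mul {k : ℕ} (M : Matrix (Fin (k+2)) (Fin (k+2)) R) :
    M.det * ((M.submatrix Fin.castSucc Fin.castSucc).det * (M.submatrix Fin.succ Fin.succ).det
      - (M.submatrix Fin.castSucc Fin.succ).det * (M.submatrix Fin.succ Fin.castSucc).det)
    = M.det * (M.det *
        (M.submatrix (fun i : Fin k => i.succ.castSucc)
          (fun j : Fin k => j.succ.castSucc)).det) := by
  have hP := det_Pmat M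
  have hA00 : adjugate M 0 0 = (M.submatrix Fin.succ Fin.succ).det := by
    rw [Matrix.adjugate_fin_succ_eq_det_submatrix]; simp
  have hAll : adjugate M (Fin.last (k+1)) (Fin.last (k+1))
      = (M.submatrix Fin.castSucc Fin.castSucc).det := by
    rw [Matrix.adjugate_fin_succ_eq_det_submatrix]; simp
  have hA0l : adjugate M 0 (Fin.last (k+1))
      = (-1) ^ (k+1) * (M.submatrix Fin.castSucc Fin.succ).det := by
    rw [Matrix.adjugate_fin_succ_eq_det_submatrix]; simp
  have hAl0 : adjugate M (Fin.last (k+1)) 0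
      = (-1) ^ (k+1) * (M.submatrix Fin.succ Fin.castSucc).det := by
    rw [Matrix.adjugate_fin_succ_eq_det_submatrix]; simp
  have hPdet : (Pmat M).det =
      (M.submatrix Fin.castSucc Fin.castSucc).det * (M.submatrix Fin.succ Fin.succ).det
      - (M.submatrix Fin.castSucc Fin.succ).det * (M.submatrix Fin.succ Fin.castSucc).det := by
    rw [hP, hA00, hAll, hA0l, hAl0]
    have : ((-1 : R) ^ (k+1)) * ((-1 : R) ^ (k+1)) = 1 := by
      rw [← pow_add, ← two_mul, pow_mul]; simp
    linear_combination (-((M.submatrix Fin.castSucc Fin.succ).det *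
      (M.submatrix Fin.succ Fin.castSucc).det)) * this
  rw [← hPdet]
  calc M.det * (Pmat M).det = (M * Pmat M).det := (Matrix.det_mul _ _).symm
    _ = _ := by rw [det_mul_Pmat]; ring


open Matrix in
/-- Desnanot–Jacobi / Dodgson condensation. -/
lemma dodgson {k : ℕ} (M : Matrix (Fin (k+2)) (Fin (k+2)) R) :
    (M.submatrix Fin.castSucc Fin.castSucc).det * (M.submatrix Fin.succ Fin.succ).det
      - (M.submatrix Fin.castSucc Fin.succ).det * (M.submatrix Fin.succ Fin.castSucc).det
    = M.det * (M.submatrix (fun i : Fin k => i.succ.castSucc)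
        (fun j : Fin k => j.succ.castSucc)).det := by
  let X := Matrix.mvPolynomialX (Fin (k+2)) (Fin (k+2)) ℤ
  have hgen : (X.submatrix Fin.castSucc Fin.castSucc).det * (X.submatrix Fin.succ Fin.succ).det
      - (X.submatrix Fin.castSucc Fin.succ).det * (X.submatrix Fin.succ Fin.castSucc).det
      = X.det * (X.submatrix (fun i : Fin k => i.succ.castSucc)
          (fun j : Fin k => j.succ.castSucc)).det :=
    mul_left_cancel₀ (Matrix.det_mvPolynomialX_ne_zero _ _) (dodgson_mul X)
  let f : MvPolynomial (Fin (k+2) × Fin (k+2)) ℤ →+* R :=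
    MvPolynomial.eval₂Hom (Int.castRingHom R) (fun p => M p.1 p.2)
  have hX : X.map f = M := Matrix.mvPolynomialX_map_eval₂ (Int.castRingHom R) M
  have h := congrArg f hgen
  simp only [map_sub, _root_.map_mul, RingHom.map_det, RingHom.mapMatrix_apply, ← Matrix.submatrix_map, hX] at h
  exact h

lemma hfun' (S : ℕ → ℝ) (i : ℕ) : Δ^[2*i] (Δ^[3] S) = Δ^[2*(i+1)] (Δ S) :=
  calc Δ^[2*i] (Δ^[3] S) = Δ^[2*i+3] S := (Function.iterate_add_apply Δ (2*i) 3 S).symm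
    _ = Δ^[2*(i+1)+1] S := by rw [show 2*i+3 = 2*(i+1)+1 from by ring]
    _ = Δ^[2*(i+1)] (Δ^[1] S) := Function.iterate_add_apply Δ (2*(i+1)) 1 S
    _ = Δ^[2*(i+1)] (Δ S) := by rw [Function.iterate_one]

theorem stmt7 (S : ℕ → ℝ) (m : ℕ) (hm : 1 ≤ m) (n : ℕ) :
    Psi m (Δ S) n * Psi m (Δ^[3] S) (n + 1)
      - Psi m (Δ S) (n + 1) * Psi m (Δ^[3] S) n
      = Psi (m + 1) (Δ S) n * Psi (m - 1) (Δ^[3] S) (n + 1) := by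
  obtain ⟨k, rfl⟩ : ∃ k, m = k + 1 := ⟨m - 1, (Nat.succ_pred_eq_of_pos hm).symm⟩
  set M : Matrix (Fin (k+2)) (Fin (k+2)) ℝ :=
    Matrix.of fun i j : Fin (k+2) => (Δ^[2*i.val] (Δ S)) (n + j.val) with hM
  have h := dodgson (R := ℝ) M
  have harg : ∀ j : ℕ, n + 1 + j = n + (j + 1) := by omega
  have e1 : Psi (k+1) (Δ S) n = (M.submatrix Fin.castSucc Fin.castSucc).det := by
    unfold Psi; congr 1
  have e2 : Psi (k+1) (Δ S) (n+1) = (M.submatrix Fin.castSucc Fin.succ).det := by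
    unfold Psi; congr 1; ext i j
    show (Δ^[2*i.val] (Δ S)) (n + 1 + j.val) = (Δ^[2*i.val] (Δ S)) (n + (j.val + 1))
    rw [harg]
  have e3 : Psi (k+1) (Δ^[3] S) n = (M.submatrix Fin.succ Fin.castSucc).det := by
    unfold Psi; congr 1
  have e4 : Psi (k+1) (Δ^[3] S) (n+1) = (M.submatrix Fin.succ Fin.succ).det := by
    unfold Psi; congr 1; ext i j
    show (Δ^[2*i.val] (Δ^[3] S)) (n + 1 + j.val)
      = (Δ^[2*(i.val+1)] (Δ S)) (n + (j.val + 1))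
    rw [harg, hfun']
  have e5 : Psi k (Δ^[3] S) (n+1) = (M.submatrix
      (fun i : Fin k => i.succ.castSucc) (fun j : Fin k => j.succ.castSucc)).det := by
    unfold Psi; congr 1; ext i j
    show (Δ^[2*i.val] (Δ^[3] S)) (n + 1 + j.val)
      = (Δ^[2*(i.val+1)] (Δ S)) (n + (j.val + 1))
    rw [harg, hfun']
  have e6 : Psi (k+1+1) (Δ S) n = M.det := rfl
  simp only [Nat.add_sub_cancel]
  rw [e1, e2, e3, e4, e5, e6, h]
end

section
/- For every integer m ≥ 1 and every n ∈ ℕ, the determinant of the (m+1)×(m+1) matrix whose row 0 consists entirely of ones and whose (i,j) entry, for 1 ≤ i ≤ m and 0 ≤ j ≤ m, is (Δ^{2(i−1)} S)_{n+j} (i.e. rows S, Δ²S, …, Δ^{2m−2}S evaluated at columns n, n+1, …, n+m) equals Ψ_m(ΔS)_n. -/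
theorem stmt9 (S : ℕ → ℝ) (m : ℕ) (hm : 1 ≤ m) (n : ℕ) :
    (Matrix.of fun i j : Fin (m + 1) =>
        if i.val = 0 then (1 : ℝ) else (Δ^[2 * (i.val - 1)] S) (n + j.val)).det
      = Psi m (Δ S) n := by
  classical
  set M : Matrix (Fin (m+1)) (Fin (m+1)) ℝ :=
    Matrix.of fun i j : Fin (m + 1) =>
      if i.val = 0 then (1 : ℝ) else (Δ^[2 * (i.val - 1)] S) (n + j.val) with hM
  set T : Matrix (Fin (m+1)) (Fin (m+1)) ℝ :=
    fun j k => (if j = k then (1:ℝ) else 0) - (if (j:ℕ)+1 = (k:ℕ) then 1 else 0) with hT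
  have hTdet : T.det = 1 := by
    have htri : T.BlockTriangular id := by
      intro j k hlt
      simp only [id] at hlt
      have hlt' : (k:ℕ) < (j:ℕ) := hlt
      have h1 : ¬ (j = k) := by
        intro h; subst h; exact lt_irrefl _ hlt
      have h2 : ¬ ((j:ℕ)+1 = (k:ℕ)) := by omega
      simp [hT, h1, h2]
    rw [Matrix.det_of_upperTriangular htri]
    apply Finset.prod_eq_one
    intro j _
    simp [hT]
  have hN : ∀ i k : Fin (m+1), (M * T) i k
      = M i k - (if h : (k:ℕ) = 0 then 0 else M i ⟨(k:ℕ)-1, by omega⟩) := by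
    intro i k
    rw [Matrix.mul_apply]
    simp only [hT, mul_sub, mul_ite, mul_one, mul_zero]
    rw [Finset.sum_sub_distrib]
    congr 1
    · rw [Finset.sum_eq_single k]
      · simp
      · intro j _ hj; simp [hj]
      · intro h; exact absurd (Finset.mem_univ k) h
    · by_cases hk : (k:ℕ) = 0
      · rw [dif_pos hk]
        apply Finset.sum_eq_zero
        intro j _
        have : ¬ ((j:ℕ)+1 = (k:ℕ)) := by omega
        simp [this]
      · rw [dif_neg hk]
        rw [Finset.sum_eq_single (⟨(k:ℕ)-1, by omega⟩ : Fin (m+1))]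
        · have : ((⟨(k:ℕ)-1, by omega⟩ : Fin (m+1)) : ℕ) + 1 = (k:ℕ) := by
            simp; omega
          simp [this]
        · intro j _ hj
          have : ¬ ((j:ℕ)+1 = (k:ℕ)) := by
            intro h
            apply hj
            apply Fin.ext
            simp
            omega
          simp [this]
        · intro h; exact absurd (Finset.mem_univ _) h
  have key : M.det = (M * T).det := by
    rw [Matrix.det_mul, hTdet, mul_one]
  rw [key, Matrix.det_succ_row_zero]
  rw [Finset.sum_eq_single (0 : Fin (m+1))]
  · have h00 : (M * T) 0 0 = 1 := by
      rw [hN]; simp [hM]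
    rw [h00]
    simp only [Fin.val_zero, pow_zero, one_mul, Fin.succAbove_zero]
    unfold Psi
    congr 1
    ext i j
    rw [Matrix.submatrix_apply, hN]
    have hj : ((j.succ : Fin (m+1)) : ℕ) ≠ 0 := by simp
    rw [dif_neg hj]
    have hs : ((j.succ : Fin (m+1)) : ℕ) - 1 = (j : ℕ) := by simp
    have hi0 : ((i.succ : Fin (m+1)) : ℕ) ≠ 0 := by simp
    simp only [hM, Matrix.of_apply, if_neg hi0]
    have hiv : ((i.succ : Fin (m+1)) : ℕ) - 1 = (i : ℕ) := by simp
    have h1 : (Fin.mk (((j.succ : Fin (m+1)) : ℕ) - 1) (by omega) : Fin (m+1)).val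
        = (j : ℕ) := hs
    rw [hiv]
    have hΔ : (Δ^[2 * (i:ℕ)] (Δ S)) (n + (j:ℕ))
        = (Δ^[2 * (i:ℕ)] S) (n + (j:ℕ) + 1) - (Δ^[2 * (i:ℕ)] S) (n + (j:ℕ)) := by
      have : Δ^[2 * (i:ℕ)] (Δ S) = Δ^[2 * (i:ℕ) + 1] S := by
        rw [Function.iterate_succ]
        rfl
      rw [this, Function.iterate_succ_apply']
      rfl
    rw [hΔ]
    simp [Fin.val_succ, Nat.add_assoc]
  · intro j _ hj
    have : (M * T) 0 j = 0 := by
      rw [hN]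
      have hjv : (j : ℕ) ≠ 0 := by
        intro h; exact hj (Fin.ext h)
      rw [dif_neg hjv]
      simp [hM]
    simp [this]
  · intro h; exact absurd (Finset.mem_univ _) h
end

section
/- For every integer m ≥ 1 and every n ∈ ℕ, the determinant of the (m+1)×(m+1) matrix whose row 0 consists entirely of ones and whose (i,j) entry, for 1 ≤ i ≤ m and 0 ≤ j ≤ m, is (Δ^{2i} S)_{n+j} (i.e. rows Δ²S, Δ⁴S, …, Δ^{2m}S evaluated at columns n, n+1, …, n+m) equals Ψ_m(Δ³S)_n. -/
lemma delta_step (v : ℕ → ℝ) (k x : ℕ) :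
    (Δ^[k] v) (x + 1) - (Δ^[k] v) x = (Δ^[k + 1] v) x := by
  rw [Function.iterate_succ_apply']
  rfl

theorem stmt10 (S : ℕ → ℝ) (m : ℕ) (hm : 1 ≤ m) (n : ℕ) :
    (Matrix.of fun i j : Fin (m + 1) =>
        if i.val = 0 then (1 : ℝ) else (Δ^[2 * i.val] S) (n + j.val)).det
      = Psi m (Δ^[3] S) n := by
  set A : Matrix (Fin (m + 1)) (Fin (m + 1)) ℝ :=
    Matrix.of fun i j : Fin (m + 1) =>
      if i.val = 0 then (1 : ℝ) else (Δ^[2 * i.val] S) (n + j.val) with hA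
  set T : Matrix (Fin (m + 1)) (Fin (m + 1)) ℝ :=
    fun k j => (if k = j then (1:ℝ) else 0) - (if k.val + 1 = j.val then 1 else 0) with hT
  set C : Matrix (Fin (m + 1)) (Fin (m + 1)) ℝ :=
    Matrix.of fun i j : Fin (m+1) =>
      Fin.cases (A i 0) (fun j' : Fin m => A i j'.succ - A i j'.castSucc) j with hCdef
  have hTdet : T.det = 1 := by
    rw [Matrix.det_of_upperTriangular]
    · simp [hT]
    · intro i j hij
      have hij' : (j : ℕ) < (i : ℕ) := hij
      simp only [hT]
      have h1 : ¬ (i = j) := by intro h; subst h; exact lt_irrefl _ hij'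
      have h2 : ¬ ((i : ℕ) + 1 = (j : ℕ)) := by omega
      simp [h1, h2]
  have key : A.det = (A * T).det := by rw [Matrix.det_mul, hTdet, mul_one]
  have base : ∀ i j, (A * T) i j = A i j - ∑ k, (if k.val + 1 = j.val then A i k else 0) := by
    intro i j
    rw [Matrix.mul_apply]
    simp [Matrix.mul_apply, hT, mul_sub, Finset.sum_sub_distrib, mul_ite, mul_one,
      mul_zero, Finset.sum_ite_eq']
  have hC : (A * T) = C := by
    ext i j
    refine Fin.cases ?_ ?_ j
    · rw [base i 0]; simp [hCdef]
    · intro j'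
      rw [base i j'.succ]
      simp only [hCdef, Matrix.of_apply, Fin.cases_succ]
      congr 1
      rw [Finset.sum_eq_single j'.castSucc]
      · simp
      · intro b _ hb
        have : ¬ ((b : ℕ) + 1 = (j'.succ : ℕ)) := by
          simp only [Fin.val_succ]
          intro h
          exact hb (Fin.ext (by simpa using Nat.succ_injective h))
        rw [if_neg this]
      · intro h; exact absurd (Finset.mem_univ _) h
  rw [key, hC, Matrix.det_succ_row_zero]
  have row0 : ∀ j : Fin (m+1), C 0 j = if j = 0 then 1 else 0 := by
    intro j
    refine Fin.cases ?_ ?_ j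
    · simp [hCdef, hA]
    · intro j'; simp [hCdef, hA, Fin.succ_ne_zero]
  rw [Finset.sum_eq_single 0]
  · rw [row0]
    simp only [if_pos rfl, Fin.val_zero, pow_zero, one_mul]
    have hsub : C.submatrix Fin.succ (0 : Fin (m+1)).succAbove
        = Matrix.of fun i j : Fin m => (Δ^[2 * i.val] (Δ^[3] S)) (n + j.val) := by
      ext i j
      simp only [Matrix.submatrix_apply, Matrix.of_apply, Fin.succAbove_zero]
      simp only [hCdef, Matrix.of_apply, Fin.cases_succ]
      have h2 : A i.succ j.succ - A i.succ j.castSucc = (Δ^[2 * i.val + 3] S) (n + j.val) := by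
        simp only [hA, Matrix.of_apply, Fin.val_succ, Fin.coe_castSucc]
        rw [if_neg (by omega), if_neg (by omega)]
        have h1 : n + (j.val + 1) = (n + j.val) + 1 := by ring
        rw [h1, delta_step S (2 * (i.val + 1)) (n + j.val)]
        congr 1
      rw [h2, ← Function.iterate_add_apply Δ (2 * i.val) 3 S]
    rw [hsub, Psi]
    simp
  · intro b _ hb
    rw [row0, if_neg hb]
    ring
  · intro h; exact absurd (Finset.mem_univ _) h
end

section
/- For every integer m ≥ 1 and every n ∈ ℕ, the determinant of the (m+1)×(m+1) matrix whose row 0 consists entirely of ones, whose row 1 has (1,j) entry equal to n + j (as a real number) for 0 ≤ j ≤ m, and whose (i,j) entry, for 2 ≤ i ≤ m and 0 ≤ j ≤ m, is (Δ^{2i−3} S)_{n+j} (i.e. rows ΔS, Δ³S, …, Δ^{2m−3}S evaluated at columns n, n+1, …, n+m) equals Ψ_{m−1}(Δ³S)_n. -/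
lemma delta_iter_succ (v : ℕ → ℝ) (k x : ℕ) :
    (Δ^[k + 1] v) x = (Δ^[k] v) (x + 1) - (Δ^[k] v) x := by
  rw [Function.iterate_succ_apply' Δ k v]
  rfl

theorem stmt11 (S : ℕ → ℝ) (m : ℕ) (hm : 1 ≤ m) (n : ℕ) :
    (Matrix.of fun i j : Fin (m + 1) =>
        if i.val = 0 then (1 : ℝ)
        else if i.val = 1 then ((n + j.val : ℕ) : ℝ)
        else (Δ^[2 * i.val - 3] S) (n + j.val)).det
      = Psi (m - 1) (Δ^[3] S) n := by
  obtain ⟨t, rfl⟩ : ∃ t, m = t + 1 := ⟨m - 1, by omega⟩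
  simp only [Nat.add_sub_cancel]
  set A : Matrix (Fin (t + 1 + 1)) (Fin (t + 1 + 1)) ℝ :=
    Matrix.of fun i j : Fin (t + 1 + 1) =>
        if i.val = 0 then (1 : ℝ)
        else if i.val = 1 then ((n + j.val : ℕ) : ℝ)
        else (Δ^[2 * i.val - 3] S) (n + j.val) with hA
  set B₁ : Matrix (Fin (t + 1 + 1)) (Fin (t + 1 + 1)) ℝ :=
    Matrix.of fun i j : Fin (t + 1 + 1) =>
        if j.val = 0 then
          (if i.val = 0 then (1 : ℝ) else if i.val = 1 then (n : ℝ)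
           else (Δ^[2 * i.val - 3] S) n)
        else
          (if i.val = 0 then (0 : ℝ) else if i.val = 1 then (1 : ℝ)
           else (Δ^[2 * i.val - 2] S) (n + j.val - 1)) with hB₁
  set B₂ : Matrix (Fin (t + 1 + 1)) (Fin (t + 1 + 1)) ℝ :=
    Matrix.of fun i j : Fin (t + 1 + 1) =>
        if j.val = 0 then
          (if i.val = 0 then (1 : ℝ) else if i.val = 1 then (n : ℝ)
           else (Δ^[2 * i.val - 3] S) n)
        else if j.val = 1 then
          (if i.val = 0 then (0 : ℝ) else if i.val = 1 then (1 : ℝ)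
           else (Δ^[2 * i.val - 2] S) n)
        else
          (if i.val = 0 then (0 : ℝ) else if i.val = 1 then (0 : ℝ)
           else (Δ^[2 * i.val - 1] S) (n + j.val - 2)) with hB₂
  have h1 : A.det = B₁.det := by
    apply Matrix.det_eq_of_forall_col_eq_smul_add_pred (fun _ => (1 : ℝ))
    · intro i
      simp only [hA, hB₁, Matrix.of_apply]
      norm_num
    · intro i j
      simp only [hA, hB₁, Matrix.of_apply, Fin.val_succ, Fin.coe_castSucc]
      rcases Nat.lt_or_ge i.val 2 with hi | hi
      · set_option linter.unnecessarySeqFocus false in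
        set_option linter.unusedTactic false in
        interval_cases h : i.val <;> simp <;> push_cast <;> ring
      · have h0 : ¬ i.val = 0 := by omega
        have h1' : ¬ i.val = 1 := by omega
        have hj : ¬ j.val + 1 = 0 := by omega
        simp only [h0, h1', hj, if_false]
        have e1 : 2 * i.val - 2 = (2 * i.val - 3) + 1 := by omega
        rw [e1, delta_iter_succ]
        have e2 : n + (j.val + 1) - 1 = n + j.val := by omega
        rw [e2, show n + (j.val + 1) = n + j.val + 1 by omega]
        ring
  have h2 : B₁.det = B₂.det := by
    apply Matrix.det_eq_of_forall_col_eq_smul_add_pred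
      (fun j => if j.val = 0 then (0 : ℝ) else 1)
    · intro i
      simp [hB₁, hB₂]
    · intro i j
      simp only [hB₁, hB₂, Matrix.of_apply, Fin.val_succ, Fin.coe_castSucc]
      rcases Nat.eq_or_lt_of_le (Nat.zero_le j.val) with hj0 | hj0
      · have : j.val = 0 := hj0.symm
        simp [this]
      · have hj : ¬ j.val = 0 := by omega
        have hj1 : ¬ j.val + 1 = 0 := by omega
        have hj2 : ¬ j.val + 1 = 1 := by omega
        simp only [hj, hj1, hj2, if_false, if_true]
        rcases Nat.lt_or_ge i.val 2 with hi | hi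
        · interval_cases h : i.val <;> simp
        · have h0 : ¬ i.val = 0 := by omega
          have h1' : ¬ i.val = 1 := by omega
          simp only [h0, h1', if_false]
          have e1 : 2 * i.val - 1 = (2 * i.val - 2) + 1 := by omega
          rw [e1, delta_iter_succ]
          have e2 : n + (j.val + 1) - 2 + 1 = n + (j.val + 1) - 1 := by omega
          have e3 : n + (j.val + 1) - 2 = n + j.val - 1 := by omega
          rw [e2, e3]
          ring
  rw [h1, h2]
  rw [Matrix.det_succ_row_zero]
  rw [Finset.sum_eq_single 0]
  · rw [Matrix.det_succ_row_zero, Finset.sum_eq_single 0]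
    · simp only [hB₂, Fin.val_zero, Fin.succAbove_zero, Matrix.submatrix_apply,
        Matrix.of_apply, Fin.val_succ, Matrix.submatrix_submatrix]
      norm_num
      rw [Psi]
      apply congrArg Matrix.det
      ext i j
      simp only [Matrix.submatrix_apply, Matrix.of_apply, Function.comp_apply, Fin.val_succ]
      have e0 : ¬ (i.val + 1 + 1 = 0) := by omega
      have e0' : ¬ (i.val + 1 + 1 = 1) := by omega
      have f0 : ¬ (j.val + 1 + 1 = 0) := by omega
      have f0' : ¬ (j.val + 1 + 1 = 1) := by omega
      simp only [e0, e0', f0, f0', if_false]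
      have e1 : 2 * (i.val + 1 + 1) - 1 = 2 * i.val + 3 := by omega
      have e2 : n + (j.val + 1 + 1) - 2 = n + j.val := by omega
      rw [e1, e2, Function.iterate_add_apply]
      rfl
    · intro b _ hb
      have hb' : ¬ (b.val + 1 = 0) := by omega
      have hb1 : ¬ (b.val + 1 = 1) := by
        intro h
        exact hb (Fin.ext (by simp only [Fin.val_zero]; omega))
      simp [hB₂, Matrix.submatrix_apply, hb', hb1, hb]
    · simp
  · intro b _ hb
    have hb' : ¬ (b.val = 0) := fun h => hb (Fin.ext (by simp only [Fin.val_zero]; omega))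
    simp [hB₂, hb', hb]
  · simp
end
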